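/- arXiv:1212.3036 — 2 statements merged into one kernel-verified Lean document; each statement's English description precedes it below -/
import Mathlib

section
/- Every finite simple graph G containing no three pairwise nonadjacent vertices (i.e., with independence number α(G) ≤ 2) satisfies χ(G) ≤ γ_ℓ(G). -/
open SimpleGraph


set_option linter.unusedSectionVars false
set_option linter.unusedVariables false
set_option maxHeartbeats 4000000

namespace S2x
open Finset
variable {V : Type*} [Fintype V] [DecidableEq V] {H : SimpleGraph V}

def IsMat (H : SimpleGraph V) (A : Finset V) (m : V → V) : Prop :=
  (∀ x, m (m x) = x) ∧ ∀ x, m x ≠ x → x ∈ A ∧ H.Adj x (m x)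

def msupp (m : V → V) : Finset V := Finset.univ.filter fun x => m x ≠ x

noncomputable def nuu (H : SimpleGraph V) (A : Finset V) : ℕ :=
  sSup {k | ∃ m, IsMat H A m ∧ k = (msupp m).card}

def resG (H : SimpleGraph V) (A : Finset V) : SimpleGraph V where
  Adj x y := H.Adj x y ∧ x ∈ A ∧ y ∈ A
  symm := ⟨fun x y h => ⟨h.1.symm, h.2.2, h.2.1⟩⟩
  loopless := ⟨fun x h => H.loopless.irrefl x h.1⟩


lemma mem_msupp {m : V → V} {x : V} : x ∈ msupp m ↔ m x ≠ x := by simp [msupp]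

lemma IsMat.inj {A : Finset V} {m : V → V} (h : IsMat H A m) : Function.Injective m :=
  Function.LeftInverse.injective h.1

lemma IsMat.mono {A B : Finset V} {m : V → V} (h : IsMat H A m) (hAB : A ⊆ B) : IsMat H B m :=
  ⟨h.1, fun x hx => ⟨hAB (h.2 x hx).1, (h.2 x hx).2⟩⟩

lemma msupp_subset {A : Finset V} {m : V → V} (h : IsMat H A m) : msupp m ⊆ A :=
  fun x hx => (h.2 x (mem_msupp.1 hx)).1

lemma pair_mem {A : Finset V} {m : V → V} (h : IsMat H A m) {x : V} (hx : m x ≠ x) :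
    m x ∈ A ∧ H.Adj (m x) x := by
  have h2 : m (m x) ≠ m x := by rw [h.1 x]; exact fun e => hx e.symm
  have := h.2 (m x) h2
  rw [h.1 x] at this
  exact this

lemma nuu_set_nonempty (A : Finset V) : {k | ∃ m, IsMat H A m ∧ k = (msupp m).card}.Nonempty :=
  ⟨(msupp (id : V → V)).card, id, ⟨fun _ => rfl, fun x h => absurd rfl h⟩, rfl⟩

lemma nuu_set_bdd (A : Finset V) : BddAbove {k | ∃ m, IsMat H A m ∧ k = (msupp m).card} := by
  refine ⟨A.card, fun k hk => ?_⟩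
  obtain ⟨m, hm, rfl⟩ := hk
  exact Finset.card_le_card (msupp_subset hm)

lemma exists_max (H : SimpleGraph V) (A : Finset V) :
    ∃ m, IsMat H A m ∧ (msupp m).card = nuu H A := by
  have := Nat.sSup_mem (nuu_set_nonempty (H := H) A) (nuu_set_bdd A)
  obtain ⟨m, hm, h⟩ := this
  exact ⟨m, hm, h.symm⟩

lemma le_nuu {A : Finset V} {m : V → V} (h : IsMat H A m) : (msupp m).card ≤ nuu H A :=
  le_csSup (nuu_set_bdd A) ⟨m, h, rfl⟩

lemma nuu_mono {A B : Finset V} (h : A ⊆ B) : nuu H A ≤ nuu H B := by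
  obtain ⟨m, hm, hc⟩ := exists_max H A
  rw [← hc]
  exact le_nuu (hm.mono h)

/-- Augmenting a matching along a single edge with both ends unmatched. -/
lemma aug {A : Finset V} {m : V → V} {u w : V} (h : IsMat H A m) (hu : u ∈ A) (hw : w ∈ A)
    (huw : u ≠ w) (hmu : m u = u) (hmw : m w = w) (hadj : H.Adj u w) :
    (msupp m).card + 2 ≤ nuu H A := by
  set m' := fun x => if x = u then w else if x = w then u else m x with hm'
  have hval : ∀ x, x ≠ u → x ≠ w → m' x = m x := by
    intro x h1 h2; simp [hm', h1, h2]
  have hmxne : ∀ x, x ≠ u → x ≠ w → m x ≠ u ∧ m x ≠ w := by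
    intro x h1 h2
    constructor
    · intro hx; apply h1; have hh := h.1 x; rw [hx, hmu] at hh; exact hh.symm
    · intro hx; apply h2; have hh := h.1 x; rw [hx, hmw] at hh; exact hh.symm
  have hmat : IsMat H A m' := by
    constructor
    · intro x
      by_cases h1 : x = u
      · subst h1; simp [hm', huw.symm, huw]
      by_cases h2 : x = w
      · subst h2; simp [hm', huw]
      · rw [hval x h1 h2]
        obtain ⟨k1, k2⟩ := hmxne x h1 h2
        rw [hval _ k1 k2, h.1]
    · intro x hx
      by_cases h1 : x = u
      · subst h1; simp only [hm', if_pos rfl]; exact ⟨hu, hadj⟩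
      by_cases h2 : x = w
      · subst h2; simp only [hm', if_neg huw.symm, if_pos rfl]; exact ⟨hw, hadj.symm⟩
      · rw [hval x h1 h2] at hx ⊢; exact h.2 x hx
  have hsupp : msupp m' = insert u (insert w (msupp m)) := by
    ext x
    simp only [mem_msupp, Finset.mem_insert]
    by_cases h1 : x = u
    · subst h1; simp [hm', huw.symm]
    by_cases h2 : x = w
    · subst h2; simp [hm', huw.symm, huw]
    · rw [hval x h1 h2]; simp [h1, h2, mem_msupp]
  have : (msupp m').card = (msupp m).card + 2 := by
    rw [hsupp, Finset.card_insert_of_notMem, Finset.card_insert_of_notMem]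
    · simp [mem_msupp, hmw]
    · simp [Finset.mem_insert, huw, mem_msupp, hmu]
  calc (msupp m).card + 2 = (msupp m').card := this.symm
    _ ≤ nuu H A := le_nuu hmat

lemma nuu_le_erase_add_two (A : Finset V) (v : V) : nuu H A ≤ nuu H (A.erase v) + 2 := by
  obtain ⟨m, hm, hc⟩ := exists_max H A
  set m' := fun x => if x = v ∨ x = m v then x else m x with hm'
  have hval : ∀ x, ¬(x = v ∨ x = m v) → m' x = m x := fun x hx => by simp [hm', hx]
  have hval2 : ∀ x, (x = v ∨ x = m v) → m' x = x := fun x hx => by simp [hm', hx]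
  have hclosed : ∀ x, ¬(x = v ∨ x = m v) → ¬(m x = v ∨ m x = m v) := by
    rintro x hx (h1 | h2)
    · exact hx (Or.inr (by rw [← h1, hm.1]))
    · exact hx (Or.inl (hm.inj h2))
  have hmat : IsMat H (A.erase v) m' := by
    constructor
    · intro x
      by_cases hx : x = v ∨ x = m v
      · rw [hval2 x hx, hval2 x hx]
      · rw [hval x hx, hval (m x) (hclosed x hx), hm.1]
    · intro x hx
      by_cases hx2 : x = v ∨ x = m v
      · exact absurd (hval2 x hx2) hx
      · rw [hval x hx2] at hx ⊢
        refine ⟨Finset.mem_erase.2 ⟨?_, (hm.2 x hx).1⟩, (hm.2 x hx).2⟩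
        intro h1; exact hx2 (Or.inl h1)
  have hsub : msupp m ⊆ msupp m' ∪ {v, m v} := by
    intro x hx
    rw [mem_msupp] at hx
    by_cases hx2 : x = v ∨ x = m v
    · apply Finset.mem_union_right; simpa using hx2
    · apply Finset.mem_union_left; rw [mem_msupp, hval x hx2]; exact hx
  calc nuu H A = (msupp m).card := hc.symm
    _ ≤ (msupp m' ∪ {v, m v}).card := Finset.card_le_card hsub
    _ ≤ (msupp m').card + ({v, m v} : Finset V).card := Finset.card_union_le _ _
    _ ≤ nuu H (A.erase v) + 2 :=
        Nat.add_le_add (le_nuu hmat) Finset.card_le_two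


lemma exists_max_missing {A : Finset V} {v : V} (h : nuu H (A.erase v) = nuu H A) :
    ∃ m, IsMat H A m ∧ (msupp m).card = nuu H A ∧ m v = v := by
  obtain ⟨m, hm, hc⟩ := exists_max H (A.erase v)
  refine ⟨m, hm.mono (Finset.erase_subset _ _), by rw [hc, h], ?_⟩
  by_contra hv
  exact Finset.notMem_erase v A (msupp_subset hm (mem_msupp.2 hv))


lemma split {X Y : Finset V} (hd : Disjoint X Y) (hcross : ∀ x ∈ X, ∀ y ∈ Y, ¬H.Adj x y) :
    nuu H (X ∪ Y) = nuu H X + nuu H Y := by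
  have hnX : ∀ {x : V}, x ∈ X → x ∉ Y := fun hx hy => (Finset.disjoint_left.1 hd) hx hy
  apply le_antisymm
  · obtain ⟨m, hm, hc⟩ := exists_max H (X ∪ Y)
    have hnocross : ∀ x, m x ≠ x → (x ∈ X ↔ m x ∈ X) := by
      intro x hx
      have h1 := hm.2 x hx
      have h2 := (pair_mem hm hx).1
      constructor
      · intro hxX
        rcases Finset.mem_union.1 h2 with h3 | h3
        · exact h3
        · exact absurd h1.2 (hcross x hxX (m x) h3)
      · intro hmxX
        rcases Finset.mem_union.1 h1.1 with h3 | h3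
        · exact h3
        · exact absurd h1.2.symm (hcross (m x) hmxX x h3)
    set mX := fun x => if x ∈ X ∧ m x ∈ X then m x else x with hmX
    set mY := fun x => if x ∈ Y ∧ m x ∈ Y then m x else x with hmY
    have hmatX : IsMat H X mX := by
      constructor
      · intro x
        by_cases hx : x ∈ X ∧ m x ∈ X
        · have : m x ∈ X ∧ m (m x) ∈ X := ⟨hx.2, by rw [hm.1]; exact hx.1⟩
          simp only [hmX, if_pos hx, if_pos this, hm.1]
        · simp [hmX, if_neg hx]
      · intro x hx
        by_cases hx2 : x ∈ X ∧ m x ∈ X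
        · simp only [hmX, if_pos hx2] at hx ⊢
          exact ⟨hx2.1, (hm.2 x hx).2⟩
        · simp [hmX, if_neg hx2] at hx
    have hmatY : IsMat H Y mY := by
      constructor
      · intro x
        by_cases hx : x ∈ Y ∧ m x ∈ Y
        · have : m x ∈ Y ∧ m (m x) ∈ Y := ⟨hx.2, by rw [hm.1]; exact hx.1⟩
          simp only [hmY, if_pos hx, if_pos this, hm.1]
        · simp [hmY, if_neg hx]
      · intro x hx
        by_cases hx2 : x ∈ Y ∧ m x ∈ Y
        · simp only [hmY, if_pos hx2] at hx ⊢
          exact ⟨hx2.1, (hm.2 x hx).2⟩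
        · simp [hmY, if_neg hx2] at hx
    have hsX : msupp mX = msupp m ∩ X := by
      ext x
      simp only [mem_msupp, Finset.mem_inter]
      by_cases hx2 : x ∈ X ∧ m x ∈ X
      · simp only [hmX, if_pos hx2]
        exact ⟨fun h => ⟨h, hx2.1⟩, fun h => h.1⟩
      · simp only [hmX, if_neg hx2, ne_eq, not_true_eq_false, false_iff, not_and]
        intro h1 h2
        exact hx2 ⟨h2, (hnocross x h1).1 h2⟩
    have hsY : msupp mY = msupp m ∩ Y := by
      have hnocrossY : ∀ x, m x ≠ x → (x ∈ Y ↔ m x ∈ Y) := by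
        intro x hx
        have h1 := hm.2 x hx
        have h2 := (pair_mem hm hx).1
        constructor
        · intro hxY
          rcases Finset.mem_union.1 h2 with h3 | h3
          · exact absurd h1.2.symm (hcross (m x) h3 x hxY)
          · exact h3
        · intro hmxY
          rcases Finset.mem_union.1 h1.1 with h3 | h3
          · exact absurd h1.2 (hcross x h3 (m x) hmxY)
          · exact h3
      ext x
      simp only [mem_msupp, Finset.mem_inter]
      by_cases hx2 : x ∈ Y ∧ m x ∈ Y
      · simp only [hmY, if_pos hx2]
        exact ⟨fun h => ⟨h, hx2.1⟩, fun h => h.1⟩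
      · simp only [hmY, if_neg hx2, ne_eq, not_true_eq_false, false_iff, not_and]
        intro h1 h2
        exact hx2 ⟨h2, (hnocrossY x h1).1 h2⟩
    have hcover : msupp m = msupp mX ∪ msupp mY := by
      rw [hsX, hsY, ← Finset.inter_union_distrib_left]
      exact (Finset.inter_eq_left.2 (msupp_subset hm)).symm
    have hdisj : Disjoint (msupp mX) (msupp mY) := by
      rw [hsX, hsY]
      exact hd.mono (Finset.inter_subset_right) (Finset.inter_subset_right)
    calc nuu H (X ∪ Y) = (msupp m).card := hc.symm
      _ = (msupp mX).card + (msupp mY).card := by rw [hcover, Finset.card_union_of_disjoint hdisj]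
      _ ≤ nuu H X + nuu H Y := Nat.add_le_add (le_nuu hmatX) (le_nuu hmatY)
  · obtain ⟨mX, hmX, hcX⟩ := exists_max H X
    obtain ⟨mY, hmY, hcY⟩ := exists_max H Y
    set m := fun x => if x ∈ X then mX x else mY x with hm
    have hXc : ∀ x, mX x ≠ x → mX x ∈ X := fun x hx => (pair_mem hmX hx).1
    have hYc : ∀ x, mY x ≠ x → mY x ∈ Y := fun x hx => (pair_mem hmY hx).1
    have hXd : ∀ x, x ∉ X → mX x = x := by
      intro x hx; by_contra h; exact hx (hmX.2 x h).1
    have hYd : ∀ x, x ∉ Y → mY x = x := by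
      intro x hx; by_contra h; exact hx (hmY.2 x h).1
    have hmat : IsMat H (X ∪ Y) m := by
      constructor
      · intro x
        by_cases hx : x ∈ X
        · by_cases h2 : mX x = x
          · simp [hm, hx, h2]
          · have h3 : mX x ∈ X := hXc x h2
            simp [hm, hx, h3, hmX.1]
        · by_cases h2 : mY x = x
          · simp [hm, hx, h2]
          · have h3 : mY x ∈ Y := hYc x h2
            have h4 : mY x ∉ X := fun hc => (Finset.disjoint_left.1 hd) hc h3
            simp [hm, hx, h4, hmY.1]
      · intro x hx
        by_cases h2 : x ∈ X
        · simp only [hm, if_pos h2] at hx ⊢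
          exact ⟨Finset.mem_union_left _ h2, (hmX.2 x hx).2⟩
        · simp only [hm, if_neg h2] at hx ⊢
          exact ⟨Finset.mem_union_right _ (hmY.2 x hx).1, (hmY.2 x hx).2⟩
    have hcover : msupp m = msupp mX ∪ msupp mY := by
      ext x
      simp only [mem_msupp, Finset.mem_union, mem_msupp]
      by_cases hx : x ∈ X
      · have : mY x = x := hYd x (fun hc => (Finset.disjoint_left.1 hd) hx hc)
        simp [hm, hx, this]
      · have : mX x = x := hXd x hx
        simp [hm, hx, this]
    have hdisj : Disjoint (msupp mX) (msupp mY) :=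
      hd.mono (msupp_subset hmX) (msupp_subset hmY)
    calc nuu H X + nuu H Y = (msupp mX).card + (msupp mY).card := by rw [hcX, hcY]
      _ = (msupp m).card := by rw [hcover, Finset.card_union_of_disjoint hdisj]
      _ ≤ nuu H (X ∪ Y) := le_nuu hmat

lemma resG_mono {A B : Finset V} (h : B ⊆ A) : resG H B ≤ resG H A :=
  fun _x _y ha => ⟨ha.1, h ha.2.1, h ha.2.2⟩

lemma walk_down {A B : Finset V} (hcl : ∀ a ∈ B, ∀ b ∈ A, H.Adj a b → b ∈ B) :
    ∀ {x y : V}, (resG H A).Walk x y → x ∈ B → (resG H B).Reachable x y := by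
  intro x y p
  induction p with
  | nil => exact fun _ => SimpleGraph.Reachable.refl _
  | @cons a b c h q ih =>
      intro hx
      have hy : b ∈ B := hcl a hx b h.2.2 h.1
      exact (SimpleGraph.Adj.reachable (⟨h.1, hx, hy⟩ : (resG H B).Adj a b)).trans (ih hy)

noncomputable def cnt (H : SimpleGraph V) (A : Finset V) : ℕ :=
  @Finset.card _ (@Finset.image _ _ (Classical.decEq _) (fun x => (resG H A).connectedComponentMk x) A)

lemma cnt_eq {A : Finset V} (inst : DecidableEq ((resG H A).ConnectedComponent)) :
    cnt H A = @Finset.card _ (@Finset.image _ _ inst (fun x => (resG H A).connectedComponentMk x) A) := by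
  unfold cnt
  congr!

lemma card_image_eq_of_iff {α β γ : Type*} [DecidableEq α] [DecidableEq β] [DecidableEq γ]
    (s : Finset α) (f : α → β) (g : α → γ)
    (h : ∀ x ∈ s, ∀ y ∈ s, (f x = f y ↔ g x = g y)) :
    (s.image f).card = (s.image g).card := by
  induction s using Finset.induction with
  | empty => simp
  | @insert a s ha ih =>
    have hss : ∀ x ∈ s, ∀ y ∈ s, (f x = f y ↔ g x = g y) := fun x hx y hy =>
      h x (Finset.mem_insert_of_mem hx) y (Finset.mem_insert_of_mem hy)
    rw [Finset.image_insert, Finset.image_insert]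
    by_cases hf : f a ∈ s.image f
    · have hg : g a ∈ s.image g := by
        obtain ⟨x, hx, hfx⟩ := Finset.mem_image.1 hf
        exact Finset.mem_image.2 ⟨x, hx,
          (h x (Finset.mem_insert_of_mem hx) a (Finset.mem_insert_self a s)).1 hfx⟩
      rw [Finset.insert_eq_self.2 hf, Finset.insert_eq_self.2 hg, ih hss]
    · have hg : g a ∉ s.image g := by
        intro hg
        obtain ⟨x, hx, hgx⟩ := Finset.mem_image.1 hg
        exact hf (Finset.mem_image.2 ⟨x, hx,
          (h x (Finset.mem_insert_of_mem hx) a (Finset.mem_insert_self a s)).2 hgx⟩)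
      rw [Finset.card_insert_of_notMem hf, Finset.card_insert_of_notMem hg, ih hss]


lemma galconn (A : Finset V)
    (hconn : ∀ x ∈ A, ∀ y ∈ A, (resG H A).Reachable x y)
    (hin : ∀ v ∈ A, nuu H (A.erase v) = nuu H A) : A.card ≤ nuu H A + 1 := by
  classical
  by_contra hcon
  push_neg at hcon
  -- any maximum matching misses at least two vertices of A
  have hmiss2 : ∀ m : V → V, IsMat H A m → (msupp m).card = nuu H A →
      ∃ u ∈ A, ∃ w ∈ A, u ≠ w ∧ m u = u ∧ m w = w := by
    intro m hm hc
    have hsub : msupp m ⊆ A := msupp_subset hm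
    have h2 : 1 < (A \ msupp m).card := by
      rw [Finset.card_sdiff_of_subset hsub]
      have := Finset.card_le_card hsub
      omega
    obtain ⟨u, hu, w, hw, huw⟩ := Finset.one_lt_card.1 h2
    rw [Finset.mem_sdiff] at hu hw
    refine ⟨u, hu.1, w, hw.1, huw, ?_, ?_⟩
    · by_contra hne; exact hu.2 (mem_msupp.2 hne)
    · by_contra hne; exact hw.2 (mem_msupp.2 hne)
  set dset := {d : ℕ | ∃ m u w, IsMat H A m ∧ (msupp m).card = nuu H A ∧ u ∈ A ∧ w ∈ A ∧
      u ≠ w ∧ m u = u ∧ m w = w ∧ d = (resG H A).dist u w} with hdset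
  have hdne : dset.Nonempty := by
    obtain ⟨m, hm, hc⟩ := Nat.sSup_mem (⟨(msupp (id : V → V)).card, id,
        ⟨fun _ => rfl, fun x h => absurd rfl h⟩, rfl⟩ :
        {k | ∃ m, IsMat H A m ∧ k = (msupp m).card}.Nonempty)
      ⟨A.card, fun k hk => by obtain ⟨m, hm, rfl⟩ := hk; exact Finset.card_le_card (msupp_subset hm)⟩
    obtain ⟨u, hu, w, hw, huw, h1, h2⟩ := hmiss2 m hm hc.symm
    exact ⟨_, m, u, w, hm, hc.symm, hu, hw, huw, h1, h2, rfl⟩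
  have hd₀ := Nat.sInf_mem hdne
  set d₀ := sInf dset with hd₀def
  obtain ⟨m, u, w, hm, hmc, hu, hw, huw, hmu, hmw, hdisteq⟩ := hd₀
  have hmin : ∀ d ∈ dset, d₀ ≤ d := fun d hd => Nat.sInf_le hd
  -- adjacent missed pairs are impossible for maximum matchings
  have noadj : ∀ m' : V → V, IsMat H A m' → (msupp m').card = nuu H A →
      ∀ a ∈ A, ∀ b ∈ A, a ≠ b → m' a = a → m' b = b → ¬H.Adj a b := by
    intro m' hm' hc' a ha b hb hab h1 h2 hadj
    have := aug hm' ha hb hab h1 h2 hadj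
    omega
  have hreach := hconn u hu w hw
  have hd₀pos : d₀ ≠ 0 := by
    intro h0
    rw [hdisteq] at h0
    exact huw (hreach.dist_eq_zero_iff.1 h0)
  obtain ⟨p, hp⟩ := hreach.exists_walk_length_eq_dist
  rw [← hdisteq] at hp
  cases p with
  | nil => rw [← hp] at hd₀pos; exact hd₀pos rfl
  | @cons _ z _ hadjr q =>
    have hz : z ∈ A := hadjr.2.2
    have hadj_uz : H.Adj u z := hadjr.1
    have huz : u ≠ z := hadjr.ne
    simp only [SimpleGraph.Walk.length_cons] at hp
    have hzw_le : (resG H A).dist z w + 1 ≤ d₀ := by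
      have := SimpleGraph.dist_le q
      omega
    have hmz : m z ≠ z := by
      intro h0
      exact noadj m hm hmc u hu z hz huz hmu h0 hadj_uz
    obtain ⟨n, hn, hnc, hnz⟩ := exists_max_missing (hin z hz)
    -- the alternating sequence starting at z
    set g : ℕ → V := fun k => Nat.rec z (fun k ih => if k % 2 = 0 then m ih else n ih) k
      with hgdef
    have hg0 : g 0 = z := rfl
    have hgs : ∀ k, g (k+1) = if k % 2 = 0 then m (g k) else n (g k) := fun k => rfl
    have hback : ∀ a b : ℕ, a % 2 = b % 2 → g (a+1) = g (b+1) → g a = g b := by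
      intro a b hpar h2
      rw [hgs a, hgs b, hpar] at h2
      by_cases hb2 : b % 2 = 0
      · simp only [if_pos hb2] at h2
        exact hm.inj h2
      · simp only [if_neg hb2] at h2
        exact hn.inj h2
    have hshift : ∀ i j : ℕ, i ≤ j → i % 2 = j % 2 → g i = g j → g (j - i) = z := by
      intro i
      induction i with
      | zero => intro j _ _ h; rw [Nat.sub_zero, ← h, hg0]
      | succ i ih =>
        intro j hij hpar hs
        obtain ⟨j', rfl⟩ : ∃ j', j = j' + 1 := ⟨j - 1, by omega⟩
        have h1 : g i = g j' := hback i j' (by omega) hs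
        have h2 := ih j' (by omega) (by omega) h1
        have : j' + 1 - (i + 1) = j' - i := by omega
        rw [this]
        exact h2
    -- a return to z forces a stopping point
    have hstop_of_ret : ∀ K : ℕ, 1 ≤ K → K % 2 = 0 → g K = z →
        ∃ k, k < K ∧ (k % 2 = 1 ∧ n (g k) = g k) := by
      intro K hK1 hKpar hKz
      have hK2 : 2 ≤ K := by omega
      have hk1par : (K-1) % 2 = 1 := by omega
      have hsucc : K - 1 + 1 = K := by omega
      have hKn : g K = n (g (K-1)) := by
        have h5 := hgs (K-1)
        rw [if_neg (by omega : ¬(K-1) % 2 = 0), hsucc] at h5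
        exact h5
      have hgK1 : g (K-1) = z := by
        apply hn.inj
        rw [← hKn, hKz, hnz]
      refine ⟨K-1, by omega, hk1par, ?_⟩
      rw [← hKn, hKz, hgK1]
    -- existence of a stopping point
    have hPex : ∃ k : ℕ, (k % 2 = 0 ∧ m (g k) = g k) ∨ (k % 2 = 1 ∧ n (g k) = g k) := by
      have hmaps : ∀ k ∈ Finset.range (2 * Fintype.card V + 1),
          (k % 2, g k) ∈ (Finset.range 2) ×ˢ (Finset.univ : Finset V) := by
        intro k _
        exact Finset.mem_product.2 ⟨Finset.mem_range.2 (by omega), Finset.mem_univ _⟩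
      have hcard : ((Finset.range 2) ×ˢ (Finset.univ : Finset V)).card
          < (Finset.range (2 * Fintype.card V + 1)).card := by
        rw [Finset.card_product, Finset.card_range, Finset.card_range, Finset.card_univ]
        omega
      obtain ⟨a, _, b, _, hab, hseq⟩ :=
        Finset.exists_ne_map_eq_of_card_lt_of_maps_to hcard hmaps
      rw [Prod.mk.injEq] at hseq
      rcases Nat.lt_or_ge a b with hlt | hge
      · have h1 := hshift a b (le_of_lt hlt) hseq.1 hseq.2
        obtain ⟨k, _, hk⟩ := hstop_of_ret (b - a) (by omega) (by omega) h1
        exact ⟨k, Or.inr hk⟩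
      · have hlt : b < a := by omega
        have h1 := hshift b a (le_of_lt hlt) hseq.1.symm hseq.2.symm
        obtain ⟨k, _, hk⟩ := hstop_of_ret (a - b) (by omega) (by omega) h1
        exact ⟨k, Or.inr hk⟩
    obtain ⟨L, hPL, hLmin⟩ : ∃ L : ℕ, ((L % 2 = 0 ∧ m (g L) = g L) ∨ (L % 2 = 1 ∧ n (g L) = g L))
        ∧ ∀ k, k < L → ¬((k % 2 = 0 ∧ m (g k) = g k) ∨ (k % 2 = 1 ∧ n (g k) = g k)) :=
      ⟨Nat.find hPex, Nat.find_spec hPex, fun k hk => Nat.find_min hPex hk⟩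
    have hL1 : 1 ≤ L := by
      rcases Nat.eq_zero_or_pos L with h0 | h1
      · exfalso
        rw [h0] at hPL
        rcases hPL with ⟨_, h⟩ | ⟨h, _⟩
        · exact hmz h
        · omega
      · exact h1
    have hmove : ∀ k, k < L → g (k+1) ≠ g k := by
      intro k hk heq
      apply hLmin k hk
      by_cases hpar : k % 2 = 0
      · left
        refine ⟨hpar, ?_⟩
        rw [hgs k, if_pos hpar] at heq
        exact heq
      · right
        refine ⟨by omega, ?_⟩
        rw [hgs k, if_neg hpar] at heq
        exact heq
    -- injectivity of g on [0, L]
    have hinj : ∀ d i j : ℕ, j ≤ L → i < j → j - i = d → g i ≠ g j := by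
      intro d
      induction d using Nat.strong_induction_on with
      | _ d ihd =>
        intro i j hjL hij hd heq
        by_cases hpar : i % 2 = j % 2
        · have hret := hshift i j (le_of_lt hij) hpar heq
          obtain ⟨k, hk, hstop⟩ := hstop_of_ret (j - i) (by omega) (by omega) hret
          exact hLmin k (by omega) (Or.inr hstop)
        · -- opposite parity: the gap is odd
          have hdodd : ¬ d % 2 = 0 := by omega
          rcases Nat.eq_or_lt_of_le (by omega : 1 ≤ d) with h1 | h3
          · -- gap 1: contradicts move
            have hj : j = i + 1 := by omega
            exact hmove i (by omega) (by rw [← hj, heq])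
          · have hd3 : 3 ≤ d := by omega
            have hij3 : i + 3 ≤ j := by omega
            by_cases hi2 : i % 2 = 0
            · -- use m-partners
              have hj2 : j % 2 = 1 := by omega
              have e1 : g (i+1) = m (g i) := by rw [hgs i, if_pos hi2]
              have hj1 : (j - 1) % 2 = 0 := by omega
              have hjsucc : j - 1 + 1 = j := by omega
              have e2 : g j = m (g (j-1)) := by
                have h5 := hgs (j-1)
                rw [if_pos hj1, hjsucc] at h5
                exact h5
              have e3 : g (i+1) = g (j-1) := by
                rw [e1, heq, e2, hm.1]
              exact ihd (d-2) (by omega) (i+1) (j-1) (by omega) (by omega) (by omega) e3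
            · -- use n-partners
              have hi2' : i % 2 = 1 := by omega
              have hj2 : j % 2 = 0 := by omega
              have e1 : g (i+1) = n (g i) := by rw [hgs i, if_neg (by omega)]
              have hj1 : ¬ (j - 1) % 2 = 0 := by omega
              have hjsucc : j - 1 + 1 = j := by omega
              have e2 : g j = n (g (j-1)) := by
                have h5 := hgs (j-1)
                rw [if_neg hj1, hjsucc] at h5
                exact h5
              have e3 : g (i+1) = g (j-1) := by
                rw [e1, heq, e2, hn.1]
              exact ihd (d-2) (by omega) (i+1) (j-1) (by omega) (by omega) (by omega) e3
    have hinj' : ∀ i j : ℕ, i ≤ L → j ≤ L → g i = g j → i = j := by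
      intro i j hi hj heq
      rcases Nat.lt_trichotomy i j with h | h | h
      · exact absurd heq (hinj (j-i) i j hj h rfl)
      · exact h
      · exact absurd heq.symm (hinj (i-j) j i hi h rfl)
    -- unique position on the path
    have hfind : ∀ k (hk : k ≤ L) (hx : ∃ k', k' ≤ L ∧ g k' = g k), Nat.find hx = k := by
      intro k hk hx
      have h2 := Nat.find_spec hx
      exact hinj' _ k (h2.1) hk h2.2
    have hgne : ∀ i j : ℕ, i ≤ L → j ≤ L → i ≠ j → g i ≠ g j :=
      fun i j hi hj hij e => hij (hinj' i j hi hj e)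
    rcases hPL with ⟨hLpar, hstopm⟩ | ⟨hLpar, hstopn⟩
    · -- CASE B : L even, g L is m-unmatched; flip m along the path, freeing z
      have hL2 : 2 ≤ L := by omega
      set m' := fun x => if hx : ∃ k', k' ≤ L ∧ g k' = x then
          (if Nat.find hx = 0 then x else if (Nat.find hx) % 2 = 1 then g (Nat.find hx + 1)
            else g (Nat.find hx - 1)) else m x with hm'def
      have hval : ∀ k, k ≤ L → m' (g k) =
          (if k = 0 then g k else if k % 2 = 1 then g (k+1) else g (k-1)) := by
        intro k hk
        have hx : ∃ k', k' ≤ L ∧ g k' = g k := ⟨k, hk, rfl⟩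
        simp only [hm'def]
        rw [dif_pos hx, hfind k hk]
      have hoff : ∀ x, (¬∃ k', k' ≤ L ∧ g k' = x) → m' x = m x := by
        intro x hx
        simp only [hm'def]
        rw [dif_neg hx]
      have hv0 : m' z = z := by
        have := hval 0 (by omega)
        rw [if_pos rfl] at this
        rw [← hg0]
        exact this
      have hvodd : ∀ k, k ≤ L → k % 2 = 1 → m' (g k) = g (k+1) := by
        intro k hk hk2
        have := hval k hk
        rw [if_neg (by omega), if_pos hk2] at this
        exact this
      have hveven : ∀ k, k ≤ L → k ≠ 0 → k % 2 = 0 → m' (g k) = g (k-1) := by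
        intro k hk hk0 hk2
        have := hval k hk
        rw [if_neg hk0, if_neg (by omega)] at this
        exact this
      have hnedge : ∀ k, k < L → k % 2 = 1 → g (k+1) = n (g k) := by
        intro k hk hk2
        rw [hgs k, if_neg (by omega)]
      have hmedge : ∀ k, k < L → k % 2 = 0 → g (k+1) = m (g k) := by
        intro k hk hk2
        rw [hgs k, if_pos hk2]
      have hmcl : ∀ k, k ≤ L → ∃ k', k' ≤ L ∧ g k' = m (g k) := by
        intro k hk
        rcases Nat.eq_or_lt_of_le hk with rfl | hklt
        · exact ⟨k, le_rfl, hstopm.symm⟩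
        · by_cases hk2 : k % 2 = 0
          · exact ⟨k+1, by omega, hmedge k hklt hk2⟩
          · have hk1 : k - 1 + 1 = k := by omega
            have h5 : g k = m (g (k-1)) := by
              have := hmedge (k-1) (by omega) (by omega)
              rw [hk1] at this
              exact this
            refine ⟨k-1, by omega, ?_⟩
            rw [h5, hm.1]
      have hm'inv : ∀ x, m' (m' x) = x := by
        intro x
        by_cases hx : ∃ k', k' ≤ L ∧ g k' = x
        · obtain ⟨k, hk, rfl⟩ := hx
          rcases Nat.eq_zero_or_pos k with rfl | hk0
          · rw [hg0, hv0, hv0]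
          · by_cases hk2 : k % 2 = 1
            · rw [hvodd k hk hk2]
              have h6 : k + 1 ≤ L := by omega
              have := hveven (k+1) h6 (by omega) (by omega)
              rw [this]
              simp
            · rw [hveven k hk (by omega) (by omega)]
              have h7 := hvodd (k-1) (by omega) (by omega)
              have h8 : k - 1 + 1 = k := by omega
              rw [h8] at h7
              exact h7
        · have hmx : ¬∃ k', k' ≤ L ∧ g k' = m x := by
            intro ⟨k, hk, hgk⟩
            apply hx
            obtain ⟨k', hk', hgk'⟩ := hmcl k hk
            refine ⟨k', hk', ?_⟩
            rw [hgk', hgk, hm.1]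
          rw [hoff x hx, hoff (m x) hmx, hm.1]
      have hm'mat : IsMat H A m' := by
        refine ⟨hm'inv, ?_⟩
        intro x hne
        by_cases hx : ∃ k', k' ≤ L ∧ g k' = x
        · obtain ⟨k, hk, rfl⟩ := hx
          rcases Nat.eq_zero_or_pos k with rfl | hk0
          · rw [← hg0] at hv0
            exact absurd hv0 hne
          · by_cases hk2 : k % 2 = 1
            · rw [hvodd k hk hk2] at hne ⊢
              have hkL : k < L := by omega
              have h5 := hnedge k hkL hk2
              rw [h5] at hne ⊢
              exact hn.2 (g k) (fun e => hne (by rw [e]))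
            · have hk2' : k % 2 = 0 := by omega
              rw [hveven k hk (by omega) hk2'] at hne ⊢
              have hk1 : k - 1 + 1 = k := by omega
              have h5 : g k = n (g (k-1)) := by
                have := hnedge (k-1) (by omega) (by omega)
                rw [hk1] at this
                exact this
              have h6 : n (g (k-1)) ≠ g (k-1) := by
                rw [← h5]
                exact hgne k (k-1) hk (by omega) (by omega)
              have := pair_mem hn h6
              rw [← h5] at this
              exact this
        · rw [hoff x hx] at hne ⊢
          exact hm.2 x hne
      have hzL : z ≠ g L := by
        rw [← hg0]
        exact hgne 0 L (by omega) le_rfl (by omega)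
      have hsupp : msupp m' = insert (g L) ((msupp m).erase z) := by
        ext x
        rw [mem_msupp, Finset.mem_insert, Finset.mem_erase, mem_msupp]
        by_cases hx : ∃ k', k' ≤ L ∧ g k' = x
        · obtain ⟨k, hk, rfl⟩ := hx
          rcases Nat.eq_zero_or_pos k with rfl | hk0
          · rw [← hg0] at hv0 ⊢
            apply iff_of_false
            · intro hne; exact hne hv0
            · rintro (h5 | ⟨h5, _⟩)
              · exact hzL (hg0 ▸ h5)
              · exact h5 (hg0 ▸ rfl)
          · rcases Nat.eq_or_lt_of_le hk with rfl | hkL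
            · apply iff_of_true
              · rw [hveven k le_rfl (by omega) (by omega)]
                exact hgne (k-1) k (by omega) le_rfl (by omega)
              · exact Or.inl rfl
            · apply iff_of_true
              · by_cases hk2 : k % 2 = 1
                · rw [hvodd k hk hk2]
                  exact hgne (k+1) k (by omega) hk (by omega)
                · rw [hveven k hk (by omega) (by omega)]
                  exact hgne (k-1) k (by omega) hk (by omega)
              · refine Or.inr ⟨?_, ?_⟩
                · rw [← hg0]
                  exact hgne k 0 hk (by omega) (by omega)
                · by_cases hk2 : k % 2 = 1
                  · have hk1 : k - 1 + 1 = k := by omega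
                    have h5 : g k = m (g (k-1)) := by
                      have := hmedge (k-1) (by omega) (by omega)
                      rw [hk1] at this
                      exact this
                    rw [h5, hm.1, ← h5]
                    exact hgne (k-1) k (by omega) hk (by omega)
                  · rw [← hmedge k hkL (by omega)]
                    exact hgne (k+1) k (by omega) hk (by omega)
        · rw [hoff x hx]
          have hxz : x ≠ z := by
            intro rfl_
            exact hx ⟨0, by omega, by rw [hg0, rfl_]⟩
          have hxL : x ≠ g L := by
            intro rfl_
            exact hx ⟨L, le_rfl, rfl_.symm⟩
          constructor
          · intro h5
            exact Or.inr ⟨hxz, h5⟩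
          · rintro (h5 | ⟨_, h5⟩)
            · exact absurd h5 hxL
            · exact h5
      have hzsupp : z ∈ msupp m := mem_msupp.2 hmz
      have hLsupp : g L ∉ (msupp m).erase z := by
        rw [Finset.mem_erase, mem_msupp]
        rintro ⟨_, h5⟩
        exact h5 hstopm
      have hcard : (msupp m').card = nuu H A := by
        rw [hsupp, Finset.card_insert_of_notMem hLsupp, Finset.card_erase_of_mem hzsupp]
        have : 1 ≤ (msupp m).card := Finset.card_pos.2 ⟨z, hzsupp⟩
        omega
      -- a vertex of A missed by m that lies on the path must be g L
      have hmissedpath : ∀ x, m x = x → (∃ k, k ≤ L ∧ g k = x) → x = g L := by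
        intro x hmx hxP
        obtain ⟨k, hk, rfl⟩ := hxP
        rcases Nat.eq_zero_or_pos k with rfl | hk0
        · rw [hg0] at hmx
          exact absurd hmx hmz
        · rcases Nat.eq_or_lt_of_le hk with rfl | hkL
          · rfl
          · exfalso
            by_cases hk2 : k % 2 = 1
            · have hk1 : k - 1 + 1 = k := by omega
              have h5 : g k = m (g (k-1)) := by
                have := hmedge (k-1) (by omega) (by omega)
                rw [hk1] at this
                exact this
              have : m (g k) = g (k-1) := by rw [h5, hm.1]
              rw [hmx] at this
              exact hgne k (k-1) hk (by omega) (by omega) this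
            · have := hmedge k hkL (by omega)
              rw [hmx] at this
              exact hgne (k+1) k (by omega) hk (by omega) this
      by_cases huP : ∃ k, k ≤ L ∧ g k = u
      · have hu_gL : u = g L := hmissedpath u hmu huP
        have hwP : ¬∃ k, k ≤ L ∧ g k = w := by
          intro hwP
          exact huw (hu_gL.trans (hmissedpath w hmw hwP).symm)
        have hm'w : m' w = w := by
          rw [hoff w (by exact hwP), hmw]
        have hm'z : m' z = z := hv0
        have hzw : z ≠ w := by
          rintro rfl
          exact hwP ⟨0, by omega, hg0⟩
        have hmem : (resG H A).dist z w ∈ dset := by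
          exact ⟨m', z, w, hm'mat, hcard, hz, hw, hzw, hm'z, hm'w, rfl⟩
        have := hmin _ hmem
        omega
      · have hm'u : m' u = u := by
          rw [hoff u (by exact huP), hmu]
        exact noadj m' hm'mat hcard u hu z hz huz hm'u hv0 hadj_uz
    · -- CASE A : L odd, g L is n-unmatched; flip n along the path, covering both z and g L
      set n' := fun x => if hx : ∃ k', k' ≤ L ∧ g k' = x then
          (if (Nat.find hx) % 2 = 0 then g (Nat.find hx + 1) else g (Nat.find hx - 1))
          else n x with hn'def
      have hval : ∀ k, k ≤ L → n' (g k) =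
          (if k % 2 = 0 then g (k+1) else g (k-1)) := by
        intro k hk
        have hx : ∃ k', k' ≤ L ∧ g k' = g k := ⟨k, hk, rfl⟩
        simp only [hn'def]
        rw [dif_pos hx, hfind k hk]
      have hoff : ∀ x, (¬∃ k', k' ≤ L ∧ g k' = x) → n' x = n x := by
        intro x hx
        simp only [hn'def]
        rw [dif_neg hx]
      have hveven : ∀ k, k ≤ L → k % 2 = 0 → n' (g k) = g (k+1) := by
        intro k hk hk2
        have := hval k hk
        rw [if_pos hk2] at this
        exact this
      have hvodd : ∀ k, k ≤ L → k % 2 = 1 → n' (g k) = g (k-1) := by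
        intro k hk hk2
        have := hval k hk
        rw [if_neg (by omega)] at this
        exact this
      have hnedge : ∀ k, k < L → k % 2 = 1 → g (k+1) = n (g k) := by
        intro k hk hk2
        rw [hgs k, if_neg (by omega)]
      have hmedge : ∀ k, k < L → k % 2 = 0 → g (k+1) = m (g k) := by
        intro k hk hk2
        rw [hgs k, if_pos hk2]
      have hncl : ∀ k, k ≤ L → ∃ k', k' ≤ L ∧ g k' = n (g k) := by
        intro k hk
        rcases Nat.eq_or_lt_of_le hk with rfl | hklt
        · exact ⟨k, le_rfl, hstopn.symm⟩
        · by_cases hk2 : k % 2 = 1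
          · exact ⟨k+1, by omega, hnedge k hklt hk2⟩
          · rcases Nat.eq_zero_or_pos k with rfl | hk0
            · exact ⟨0, by omega, by rw [hg0, hnz]⟩
            · have hk1 : k - 1 + 1 = k := by omega
              have h5 : g k = n (g (k-1)) := by
                have := hnedge (k-1) (by omega) (by omega)
                rw [hk1] at this
                exact this
              refine ⟨k-1, by omega, ?_⟩
              rw [h5, hn.1]
      have hn'inv : ∀ x, n' (n' x) = x := by
        intro x
        by_cases hx : ∃ k', k' ≤ L ∧ g k' = x
        · obtain ⟨k, hk, rfl⟩ := hx
          by_cases hk2 : k % 2 = 0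
          · rw [hveven k hk hk2]
            have h6 : k + 1 ≤ L := by omega
            have := hvodd (k+1) h6 (by omega)
            rw [this]
            simp
          · rw [hvodd k hk (by omega)]
            have h7 := hveven (k-1) (by omega) (by omega)
            have h8 : k - 1 + 1 = k := by omega
            rw [h8] at h7
            exact h7
        · have hnx : ¬∃ k', k' ≤ L ∧ g k' = n x := by
            intro ⟨k, hk, hgk⟩
            apply hx
            obtain ⟨k', hk', hgk'⟩ := hncl k hk
            refine ⟨k', hk', ?_⟩
            rw [hgk', hgk, hn.1]
          rw [hoff x hx, hoff (n x) hnx, hn.1]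
      have hn'mat : IsMat H A n' := by
        refine ⟨hn'inv, ?_⟩
        intro x hne
        by_cases hx : ∃ k', k' ≤ L ∧ g k' = x
        · obtain ⟨k, hk, rfl⟩ := hx
          by_cases hk2 : k % 2 = 0
          · rw [hveven k hk hk2] at hne ⊢
            have hkL : k < L := by omega
            have h5 := hmedge k hkL hk2
            rw [h5] at hne ⊢
            exact hm.2 (g k) (fun e => hne (by rw [e]))
          · have hk0 : 1 ≤ k := by omega
            rw [hvodd k hk (by omega)] at hne ⊢
            have hk1 : k - 1 + 1 = k := by omega
            have h5 : g k = m (g (k-1)) := by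
              have := hmedge (k-1) (by omega) (by omega)
              rw [hk1] at this
              exact this
            have h6 : m (g (k-1)) ≠ g (k-1) := by
              rw [← h5]
              exact hgne k (k-1) hk (by omega) (by omega)
            have := pair_mem hm h6
            rw [← h5] at this
            exact this
        · rw [hoff x hx] at hne ⊢
          exact hn.2 x hne
      have hzL : z ≠ g L := by
        rw [← hg0]
        exact hgne 0 L (by omega) le_rfl (by omega)
      have hsupp : msupp n' = insert z (insert (g L) (msupp n)) := by
        ext x
        rw [mem_msupp, Finset.mem_insert, Finset.mem_insert, mem_msupp]
        by_cases hx : ∃ k', k' ≤ L ∧ g k' = x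
        · obtain ⟨k, hk, rfl⟩ := hx
          apply iff_of_true
          · by_cases hk2 : k % 2 = 0
            · rw [hveven k hk hk2]
              exact hgne (k+1) k (by omega) hk (by omega)
            · rw [hvodd k hk (by omega)]
              exact hgne (k-1) k (by omega) hk (by omega)
          · rcases Nat.eq_zero_or_pos k with rfl | hk0
            · exact Or.inl hg0
            · rcases Nat.eq_or_lt_of_le hk with rfl | hkL
              · exact Or.inr (Or.inl rfl)
              · refine Or.inr (Or.inr ?_)
                by_cases hk2 : k % 2 = 1
                · rw [← hnedge k hkL hk2]
                  exact hgne (k+1) k (by omega) hk (by omega)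
                · have hk1 : k - 1 + 1 = k := by omega
                  have h5 : g k = n (g (k-1)) := by
                    have := hnedge (k-1) (by omega) (by omega)
                    rw [hk1] at this
                    exact this
                  rw [h5, hn.1, ← h5]
                  exact hgne (k-1) k (by omega) hk (by omega)
        · rw [hoff x hx]
          have hxz : x ≠ z := by
            intro rfl_
            exact hx ⟨0, by omega, by rw [hg0, rfl_]⟩
          have hxL : x ≠ g L := by
            intro rfl_
            exact hx ⟨L, le_rfl, rfl_.symm⟩
          constructor
          · intro h5
            exact Or.inr (Or.inr h5)
          · rintro (h5 | h5 | h5)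
            · exact absurd h5 hxz
            · exact absurd h5 hxL
            · exact h5
      have hzsupp : z ∉ insert (g L) (msupp n) := by
        rw [Finset.mem_insert, mem_msupp]
        rintro (h5 | h5)
        · exact hzL h5
        · exact h5 hnz
      have hLsupp : g L ∉ msupp n := by
        rw [mem_msupp]
        intro h5
        exact h5 hstopn
      have hcard : (msupp n').card = nuu H A + 2 := by
        rw [hsupp, Finset.card_insert_of_notMem hzsupp, Finset.card_insert_of_notMem hLsupp,
          hnc]
      have := le_nuu hn'mat
      omega

lemma gal : ∀ (N : ℕ) (A : Finset V), A.card ≤ N →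
    (∀ v ∈ A, nuu H (A.erase v) = nuu H A) → A.card ≤ nuu H A + cnt H A := by
  intro N
  induction N with
  | zero =>
    intro A hA _
    simp [Nat.le_zero.1 hA]
  | succ N ih =>
    intro A hA hin
    rcases A.eq_empty_or_nonempty with rfl | ⟨x₀, hx₀⟩
    · simp
    letI instD : DecidableEq ((resG H A).ConnectedComponent) := Classical.decEq _
    set mkA := fun x => (resG H A).connectedComponentMk x with hmkA
    set C := A.filter (fun x => mkA x = mkA x₀) with hC
    set B := A.filter (fun x => ¬mkA x = mkA x₀) with hB
    have hx₀C : x₀ ∈ C := Finset.mem_filter.2 ⟨hx₀, rfl⟩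
    have hCA : C ⊆ A := Finset.filter_subset _ _
    have hBA : B ⊆ A := Finset.filter_subset _ _
    have hunion : C ∪ B = A := Finset.filter_union_filter_not_eq _ A
    have hdisj : Disjoint C B := Finset.disjoint_filter_filter_not A A _
    have hCcl : ∀ a ∈ C, ∀ b ∈ A, H.Adj a b → b ∈ C := by
      intro a ha b hb hadj
      have : mkA b = mkA a :=
        (SimpleGraph.ConnectedComponent.connectedComponentMk_eq_of_adj
          (⟨hadj, (Finset.mem_filter.1 ha).1, hb⟩ : (resG H A).Adj a b)).symm
      exact Finset.mem_filter.2 ⟨hb, this.trans (Finset.mem_filter.1 ha).2⟩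
    have hBcl : ∀ a ∈ B, ∀ b ∈ A, H.Adj a b → b ∈ B := by
      intro a ha b hb hadj
      have : mkA b = mkA a :=
        (SimpleGraph.ConnectedComponent.connectedComponentMk_eq_of_adj
          (⟨hadj, (Finset.mem_filter.1 ha).1, hb⟩ : (resG H A).Adj a b)).symm
      exact Finset.mem_filter.2 ⟨hb, fun e => (Finset.mem_filter.1 ha).2 (this.symm.trans e)⟩
    have hcross : ∀ x ∈ C, ∀ y ∈ B, ¬H.Adj x y := by
      intro x hx y hy hadj
      have : y ∈ C := hCcl x hx y (hBA hy) hadj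
      exact (Finset.mem_filter.1 hy).2 (Finset.mem_filter.1 this).2
    have hsplit : nuu H A = nuu H C + nuu H B := by
      rw [← hunion]; exact split hdisj hcross
    -- inessential transfer to C
    have hinC : ∀ v ∈ C, nuu H (C.erase v) = nuu H C := by
      intro v hv
      have h1 : A.erase v = (C.erase v) ∪ B := by
        rw [← hunion, Finset.erase_union_distrib,
          Finset.erase_eq_of_notMem (Finset.disjoint_left.1 hdisj hv)]
      have h2 : nuu H (A.erase v) = nuu H (C.erase v) + nuu H B := by
        rw [h1]
        exact split (hdisj.mono_left (Finset.erase_subset _ _))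
          (fun x hx y hy => hcross x (Finset.erase_subset _ _ hx) y hy)
      have h3 := hin v (hCA hv)
      rw [h2, hsplit] at h3
      exact Nat.add_right_cancel h3
    have hinB : ∀ v ∈ B, nuu H (B.erase v) = nuu H B := by
      intro v hv
      have h1 : A.erase v = C ∪ (B.erase v) := by
        rw [← hunion, Finset.erase_union_distrib,
          Finset.erase_eq_of_notMem (Finset.disjoint_right.1 hdisj hv)]
      have h2 : nuu H (A.erase v) = nuu H C + nuu H (B.erase v) := by
        rw [h1]
        exact split (hdisj.mono_right (Finset.erase_subset _ _))
          (fun x hx y hy => hcross x hx y (Finset.erase_subset _ _ hy))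
      have h3 := hin v (hBA hv)
      rw [h2, hsplit] at h3
      exact Nat.add_left_cancel h3
    -- connectivity of C
    have hconnC : ∀ x ∈ C, ∀ y ∈ C, (resG H C).Reachable x y := by
      intro x hx y hy
      have hr : (resG H A).Reachable x y := by
        have : mkA x = mkA y :=
          (Finset.mem_filter.1 hx).2.trans (Finset.mem_filter.1 hy).2.symm
        exact SimpleGraph.ConnectedComponent.exact this
      obtain ⟨p⟩ := hr
      exact walk_down hCcl p hx
    have hgalC : C.card ≤ nuu H C + 1 := galconn C hconnC hinC
    by_cases hBe : B = ∅
    · -- A is connected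
      have hcnt : 1 ≤ cnt H A := by
        rw [cnt_eq instD]
        refine Finset.card_pos.2 ⟨mkA x₀, Finset.mem_image.2 ⟨x₀, hx₀, rfl⟩⟩
      have hAC : A = C := by rw [← hunion, hBe, Finset.union_empty]
      have hnA : nuu H C = nuu H A := by rw [hAC]
      calc A.card = C.card := by rw [hAC]
        _ ≤ nuu H C + 1 := hgalC
        _ ≤ nuu H A + cnt H A := by
            rw [hnA]
            exact Nat.add_le_add le_rfl hcnt
    · -- B nonempty, use IH
      have hcard : C.card + B.card = A.card := by
        rw [← hunion]; exact (Finset.card_union_of_disjoint hdisj).symm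
      have hBlt : B.card ≤ N := by
        have : 1 ≤ C.card := Finset.card_pos.2 ⟨x₀, hx₀C⟩
        omega
      have hihB := ih B hBlt hinB
      -- cnt A = cnt B + 1
      letI instB : DecidableEq ((resG H B).ConnectedComponent) := Classical.decEq _
      have hmkiff : ∀ x ∈ B, ∀ y ∈ B,
          (mkA x = mkA y ↔ (resG H B).connectedComponentMk x = (resG H B).connectedComponentMk y) := by
        intro x hx y hy
        constructor
        · intro he
          obtain ⟨p⟩ := SimpleGraph.ConnectedComponent.exact he
          exact SimpleGraph.ConnectedComponent.sound (walk_down hBcl p hx)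
        · intro he
          exact SimpleGraph.ConnectedComponent.sound
            ((SimpleGraph.ConnectedComponent.exact he).mono (resG_mono hBA))
      have himg : (B.image mkA).card = cnt H B := by
        rw [cnt_eq instB]
        exact card_image_eq_of_iff B mkA _ hmkiff
      have hCimg : C.image mkA = {mkA x₀} := by
        apply Finset.eq_singleton_iff_unique_mem.2
        constructor
        · exact Finset.mem_image.2 ⟨x₀, hx₀C, rfl⟩
        · intro c hc
          obtain ⟨x, hx, rfl⟩ := Finset.mem_image.1 hc
          exact (Finset.mem_filter.1 hx).2
      have hnotmem : mkA x₀ ∉ B.image mkA := by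
        intro hmem
        obtain ⟨x, hx, he⟩ := Finset.mem_image.1 hmem
        exact (Finset.mem_filter.1 hx).2 he
      have himgA : A.image mkA = insert (mkA x₀) (B.image mkA) := by
        ext c
        simp only [Finset.mem_image, Finset.mem_insert]
        constructor
        · rintro ⟨x, hx, rfl⟩
          by_cases he : mkA x = mkA x₀
          · exact Or.inl he
          · exact Or.inr ⟨x, Finset.mem_filter.2 ⟨hx, he⟩, rfl⟩
        · rintro (rfl | ⟨x, hx, rfl⟩)
          · exact ⟨x₀, hx₀, rfl⟩
          · exact ⟨x, hBA hx, rfl⟩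
      have hcntA : cnt H A = cnt H B + 1 := by
        rw [cnt_eq instD, ← hmkA, himgA, Finset.card_insert_of_notMem hnotmem, himg]
      calc A.card = C.card + B.card := hcard.symm
        _ ≤ (nuu H C + 1) + (nuu H B + cnt H B) := Nat.add_le_add hgalC hihB
        _ = (nuu H C + nuu H B) + (cnt H B + 1) := by ring
        _ = nuu H A + cnt H A := by rw [hsplit, hcntA]

/-- The support of an involution-matching has even cardinality. -/
lemma even_msupp : ∀ (k : ℕ) (m : V → V), (∀ x, m (m x) = x) → (msupp m).card = k →
    2 ∣ k := by
  intro k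
  induction k using Nat.strong_induction_on with
  | _ k ihk =>
    intro m hinv hc
    rcases Nat.eq_zero_or_pos k with rfl | hk0
    · exact ⟨0, rfl⟩
    · have : (msupp m).Nonempty := Finset.card_pos.1 (by omega)
      obtain ⟨x, hx⟩ := this
      have hmx : m x ≠ x := mem_msupp.1 hx
      set m' := fun y => if y = x ∨ y = m x then y else m y with hm'
      have hval : ∀ y, ¬(y = x ∨ y = m x) → m' y = m y := fun y hy => by simp [hm', hy]
      have hval2 : ∀ y, (y = x ∨ y = m x) → m' y = y := fun y hy => by simp [hm', hy]
      have hminj : Function.Injective m := Function.LeftInverse.injective hinv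
      have hclosed : ∀ y, ¬(y = x ∨ y = m x) → ¬(m y = x ∨ m y = m x) := by
        rintro y hy (h1 | h2)
        · exact hy (Or.inr (by rw [← h1, hinv]))
        · exact hy (Or.inl (hminj h2))
      have hinv' : ∀ y, m' (m' y) = y := by
        intro y
        by_cases hy : y = x ∨ y = m x
        · rw [hval2 y hy, hval2 y hy]
        · rw [hval y hy, hval (m y) (hclosed y hy), hinv]
      have hsupp : msupp m' = ((msupp m).erase x).erase (m x) := by
        ext y
        rw [mem_msupp, Finset.mem_erase, Finset.mem_erase, mem_msupp]
        by_cases hy : y = x ∨ y = m x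
        · rw [hval2 y hy]
          simp only [ne_eq, not_true_eq_false, false_iff, not_and]
          rcases hy with rfl | rfl
          · intro h1 h2; exact absurd rfl h2
          · intro h1; exact absurd rfl h1
        · rw [hval y hy]
          push_neg at hy
          simp [hy.1, hy.2]
      have hmxmem : m x ∈ (msupp m).erase x := by
        rw [Finset.mem_erase, mem_msupp]
        exact ⟨hmx, fun e => hmx (hminj e)⟩
      have hcard' : (msupp m').card = k - 2 := by
        rw [hsupp, Finset.card_erase_of_mem hmxmem, Finset.card_erase_of_mem hx, hc]
        omega
      have hk2 : 2 ≤ k := by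
        have h1 : 1 ≤ (msupp m).card := Finset.card_pos.2 ⟨x, hx⟩
        have h2 : ((msupp m).erase x).card < (msupp m).card := Finset.card_erase_lt_of_mem hx
        have h3 : 1 ≤ ((msupp m).erase x).card := Finset.card_pos.2 ⟨m x, hmxmem⟩
        omega
      obtain ⟨r, hr⟩ := ihk (k - 2) (by omega) m' hinv' hcard'
      exact ⟨r + 1, by omega⟩

lemma nuu_even (A : Finset V) : 2 ∣ nuu H A := by
  obtain ⟨m, hm, hc⟩ := exists_max H A
  exact even_msupp (nuu H A) m hm.1 hc


lemma key [DecidableRel H.Adj] (htf : ∀ a b c : V, H.Adj a b → H.Adj a c → H.Adj b c → False) :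
    ∀ (N : ℕ) (A : Finset V), A.card ≤ N → A.Nonempty →
    ∃ v ∈ A, ∃ I : Finset V, I ⊆ A ∧ v ∈ I ∧
      (∀ x ∈ I, ∀ y ∈ I, x ≠ y → ¬H.Adj x y) ∧
      (A.filter (fun x => H.Adj v x)).card + A.card ≤ I.card + nuu H A + 1 := by
  intro N
  induction N with
  | zero =>
    intro A hA hne
    exact absurd (Finset.card_pos.2 hne) (by omega)
  | succ N ih =>
    intro A hA hne
    obtain ⟨v, hv, hvmin⟩ := Finset.exists_min_image A
      (fun v => (A.filter (fun x => H.Adj v x)).card) hne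
    by_cases hbase : A.card ≤ nuu H A + 1
    · -- base case
      by_cases hdeg : (A.filter (fun x => H.Adj v x)).card = 0
      · refine ⟨v, hv, {v}, Finset.singleton_subset_iff.2 hv, Finset.mem_singleton_self v,
          ?_, ?_⟩
        · intro x hx y hy hxy
          rw [Finset.mem_singleton] at hx hy
          exact absurd (hx.trans hy.symm) hxy
        · rw [hdeg, Finset.card_singleton]
          omega
      · have : (A.filter (fun x => H.Adj v x)).Nonempty :=
          Finset.card_pos.1 (by omega)
        obtain ⟨u, hu⟩ := this
        rw [Finset.mem_filter] at hu
        refine ⟨v, hv, A.filter (fun x => H.Adj u x), Finset.filter_subset _ _,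
          Finset.mem_filter.2 ⟨hv, hu.2.symm⟩, ?_, ?_⟩
        · intro x hx y hy hxy hadj
          rw [Finset.mem_filter] at hx hy
          exact htf u x y hx.2 hy.2 hadj
        · have := hvmin u hu.1
          omega
    · by_cases hess : ∃ v' ∈ A, nuu H (A.erase v') ≠ nuu H A
      · -- essential vertex: recurse on A minus it
        obtain ⟨v', hv', hv'ne⟩ := hess
        have hlt : nuu H (A.erase v') < nuu H A :=
          lt_of_le_of_ne (nuu_mono (Finset.erase_subset _ _)) hv'ne
        have hnuu2 : nuu H (A.erase v') + 2 ≤ nuu H A := by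
          obtain ⟨r1, h1⟩ := nuu_even (H := H) (A.erase v')
          obtain ⟨r2, h2⟩ := nuu_even (H := H) A
          omega
        have hene : (A.erase v').Nonempty := by
          by_contra hemp
          rw [Finset.not_nonempty_iff_eq_empty] at hemp
          have h1 : A.card ≤ 1 := by
            have := Finset.card_erase_of_mem hv'
            rw [hemp] at this
            simp at this
            omega
          have h2 : nuu H A ≤ A.card := by
            obtain ⟨m, hm, hc⟩ := exists_max H A
            rw [← hc]
            exact Finset.card_le_card (fun x hx => (hm.2 x (mem_msupp.1 hx)).1)
          omega
        have hecard : (A.erase v').card ≤ N := by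
          have := Finset.card_erase_of_mem hv'
          have h0 : 1 ≤ A.card := Finset.card_pos.2 hne
          omega
        obtain ⟨v'', hv'', I, hIsub, hvI, hindep, hineq⟩ := ih (A.erase v') hecard hene
        refine ⟨v'', Finset.mem_of_mem_erase hv'', I,
          hIsub.trans (Finset.erase_subset _ _), hvI, hindep, ?_⟩
        have hdegle : (A.filter (fun x => H.Adj v'' x)).card ≤
            ((A.erase v').filter (fun x => H.Adj v'' x)).card + 1 := by
          have hsub : A.filter (fun x => H.Adj v'' x) ⊆
              insert v' ((A.erase v').filter (fun x => H.Adj v'' x)) := by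
            intro x hx
            rw [Finset.mem_filter] at hx
            by_cases hxv : x = v'
            · exact Finset.mem_insert.2 (Or.inl hxv)
            · exact Finset.mem_insert.2 (Or.inr (Finset.mem_filter.2
                ⟨Finset.mem_erase.2 ⟨hxv, hx.1⟩, hx.2⟩))
          calc (A.filter (fun x => H.Adj v'' x)).card
              ≤ (insert v' ((A.erase v').filter (fun x => H.Adj v'' x))).card :=
                Finset.card_le_card hsub
            _ ≤ _ := Finset.card_insert_le _ _
        have hcA : (A.erase v').card + 1 = A.card := by
          have := Finset.card_erase_of_mem hv'
          have h0 : 1 ≤ A.card := Finset.card_pos.2 hne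
          omega
        omega
      · -- all vertices inessential: Gallai's lemma
        push_neg at hess
        have hgal := gal A.card A le_rfl hess
        letI instD : DecidableEq ((resG H A).ConnectedComponent) := Classical.decEq _
        set mkA := fun x => (resG H A).connectedComponentMk x with hmkA
        have hsame : ∀ x ∈ A, ∀ y ∈ A, H.Adj x y → mkA x = mkA y := by
          intro x hx y hy hadj
          exact SimpleGraph.ConnectedComponent.connectedComponentMk_eq_of_adj
            (⟨hadj, hx, hy⟩ : (resG H A).Adj x y)
        have hdiff : ∀ x ∈ A, ∀ y ∈ A, mkA x ≠ mkA y → ¬H.Adj x y :=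
          fun x hx y hy hne hadj => hne (hsame x hx y hy hadj)
        have hcnt : cnt H A = (A.image mkA).card := by
          rw [cnt_eq instD, ← hmkA]
        have hcnt1 : 1 ≤ cnt H A := by
          rw [hcnt]
          exact Finset.card_pos.2 ⟨mkA v, Finset.mem_image.2 ⟨v, hv, rfl⟩⟩
        set pick : (resG H A).ConnectedComponent → V := fun c =>
          if h : ∃ x, x ∈ A ∧ mkA x = c then h.choose else v with hpickdef
        have hpickP : ∀ c ∈ A.image mkA, pick c ∈ A ∧ mkA (pick c) = c := by
          intro c hc
          obtain ⟨x, hx, he⟩ := Finset.mem_image.1 hc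
          have h : ∃ x, x ∈ A ∧ mkA x = c := ⟨x, hx, he⟩
          simp only [hpickdef]
          rw [dif_pos h]
          exact ⟨h.choose_spec.1, h.choose_spec.2⟩
        set reps := ((A.image mkA).erase (mkA v)).image pick with hreps
        have hrepsP : ∀ y ∈ reps, y ∈ A ∧ mkA y ≠ mkA v := by
          intro y hy
          obtain ⟨c, hc, rfl⟩ := Finset.mem_image.1 hy
          have hc2 := Finset.mem_erase.1 hc
          obtain ⟨h1, h2⟩ := hpickP c hc2.2
          exact ⟨h1, by rw [h2]; exact hc2.1⟩
        have hrepscard : reps.card = cnt H A - 1 := by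
          rw [hreps, Finset.card_image_of_injOn, Finset.card_erase_of_mem
            (Finset.mem_image.2 ⟨v, hv, rfl⟩), hcnt]
          intro c hc c' hc' he
          have h1 := (hpickP c (Finset.mem_erase.1 hc).2).2
          have h2 := (hpickP c' (Finset.mem_erase.1 hc').2).2
          rw [← h1, ← h2, he]
        have hrepsindep : ∀ x ∈ reps, ∀ y ∈ reps, x ≠ y → ¬H.Adj x y := by
          intro x hx y hy hxy hadj
          obtain ⟨c, hc, rfl⟩ := Finset.mem_image.1 hx
          obtain ⟨c', hc', rfl⟩ := Finset.mem_image.1 hy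
          have h1 := hpickP c (Finset.mem_erase.1 hc).2
          have h2 := hpickP c' (Finset.mem_erase.1 hc').2
          have : c = c' := by
            rw [← h1.2, ← h2.2]
            exact hsame _ h1.1 _ h2.1 hadj
          exact hxy (by rw [this])
        by_cases hdeg : (A.filter (fun x => H.Adj v x)).card = 0
        · -- v is isolated in A: take v together with one vertex per other component
          refine ⟨v, hv, insert v reps, ?_, Finset.mem_insert_self _ _, ?_, ?_⟩
          · intro x hx
            rcases Finset.mem_insert.1 hx with rfl | hx
            · exact hv
            · exact (hrepsP x hx).1
          · intro x hx y hy hxy hadj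
            rcases Finset.mem_insert.1 hx with rfl | hx2
            · rcases Finset.mem_insert.1 hy with rfl | hy2
              · exact hxy rfl
              · obtain ⟨hyA, hymk⟩ := hrepsP y hy2
                exact hymk (hsame y hyA x hv hadj.symm)
            · rcases Finset.mem_insert.1 hy with rfl | hy2
              · obtain ⟨hxA, hxmk⟩ := hrepsP x hx2
                exact hxmk (hsame x hxA y hv hadj)
              · exact hrepsindep x hx2 y hy2 hxy hadj
          · have hvnr : v ∉ reps := fun hvr => (hrepsP v hvr).2 rfl
            rw [Finset.card_insert_of_notMem hvnr, hrepscard, hdeg]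
            omega
        · -- v has a neighbour u in A of (weakly) larger degree
          have : (A.filter (fun x => H.Adj v x)).Nonempty := Finset.card_pos.1 (by omega)
          obtain ⟨u, hu⟩ := this
          rw [Finset.mem_filter] at hu
          have hmkuv : mkA u = mkA v := hsame u hu.1 v hv hu.2.symm
          set Nu := A.filter (fun x => H.Adj u x) with hNu
          have hNusub : ∀ x ∈ Nu, mkA x = mkA v := by
            intro x hx
            rw [hNu, Finset.mem_filter] at hx
            rw [← hmkuv]
            exact (hsame u hu.1 x hx.1 hx.2).symm
          have hdisj : Disjoint Nu reps := by
            rw [Finset.disjoint_left]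
            intro x hx hxr
            exact (hrepsP x hxr).2 (hNusub x hx)
          refine ⟨v, hv, Nu ∪ reps, ?_, ?_, ?_, ?_⟩
          · intro x hx
            rcases Finset.mem_union.1 hx with hx | hx
            · exact (Finset.mem_filter.1 hx).1
            · exact (hrepsP x hx).1
          · exact Finset.mem_union_left _ (Finset.mem_filter.2 ⟨hv, hu.2.symm⟩)
          · intro x hx y hy hxy hadj
            rcases Finset.mem_union.1 hx with hx2 | hx2 <;>
              rcases Finset.mem_union.1 hy with hy2 | hy2
            · exact htf u x y (Finset.mem_filter.1 hx2).2 (Finset.mem_filter.1 hy2).2 hadj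
            · exact (hrepsP y hy2).2 (by
                rw [← hNusub x hx2]
                exact hsame y (hrepsP y hy2).1 x (Finset.mem_filter.1 hx2).1 hadj.symm)
            · exact (hrepsP x hx2).2 (by
                rw [← hNusub y hy2]
                exact hsame x (hrepsP x hx2).1 y (Finset.mem_filter.1 hy2).1 hadj)
            · exact hrepsindep x hx2 y hy2 hxy hadj
          · rw [Finset.card_union_of_disjoint hdisj, hrepscard]
            have := hvmin u hu.1
            simp only [hNu]
            omega

end S2x

namespace Paper

variable {V : Type*} {W : Type*}

/-- A graph is claw-free if no vertex has three pairwise nonadjacent neighbours. -/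
def ClawFree (G : SimpleGraph V) : Prop :=
  ¬ ∃ (v a b c : V), G.Adj v a ∧ G.Adj v b ∧ G.Adj v c ∧
      ¬G.Adj a b ∧ ¬G.Adj a c ∧ ¬G.Adj b c ∧ a ≠ b ∧ a ≠ c ∧ b ≠ c

/-- A graph is quasi-line if every neighbourhood is covered by two cliques. -/
def QuasiLine (G : SimpleGraph V) : Prop :=
  ∀ v : V, ∃ S T : Set V, G.IsClique S ∧ G.IsClique T ∧ G.neighborSet v ⊆ S ∪ T

/-- The clique number ω(G). -/
noncomputable def cliqueNum (G : SimpleGraph V) : ℕ :=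
  sSup {n | ∃ s : Finset V, G.IsNClique n s}

/-- The clique number of the subgraph induced on a vertex set `S`. -/
noncomputable def cliqueNumOn (G : SimpleGraph V) (S : Set V) : ℕ :=
  sSup {n | ∃ s : Finset V, ↑s ⊆ S ∧ G.IsNClique n s}

/-- ω(v): the maximum size of a clique containing `v`. -/
noncomputable def omegaAt (G : SimpleGraph V) (v : V) : ℕ :=
  sSup {n | ∃ s : Finset V, G.IsNClique n s ∧ v ∈ s}

/-- The degree of a vertex (as the cardinality of its neighbourhood). -/
noncomputable def degree' (G : SimpleGraph V) (v : V) : ℕ := (G.neighborSet v).ncard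

/-- The maximum degree Δ(G). -/
noncomputable def maxDeg (G : SimpleGraph V) : ℕ := sSup {n | ∃ v : V, n = degree' G v}

/-- γ_ℓ(v) = ⌈(d(v)+1+ω(v))/2⌉. -/
noncomputable def gammaLocalAt (G : SimpleGraph V) (v : V) : ℕ :=
  (degree' G v + 1 + omegaAt G v + 1) / 2

/-- γ_ℓ(G) = max over vertices of γ_ℓ(v). -/
noncomputable def gammaLocal (G : SimpleGraph V) : ℕ :=
  sSup {n | ∃ v : V, n = gammaLocalAt G v}

/-- The closed neighbourhood of a vertex. -/
def closedNbhd (G : SimpleGraph V) (v : V) : Set V := insert v (G.neighborSet v)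

/-- The closed neighbourhood within an induced subgraph on `S`. -/
def closedNbhdOn (G : SimpleGraph V) (S : Set V) (v : V) : Set V := S ∩ closedNbhd G v

/-- A triad: three pairwise nonadjacent vertices. -/
def IsTriad (G : SimpleGraph V) (T : Finset V) : Prop :=
  T.card = 3 ∧ ∀ u ∈ T, ∀ w ∈ T, u ≠ w → ¬G.Adj u w

/-- A good triad within the induced subgraph on `S`: every vertex of the induced subgraph
outside `T` has two neighbours in `T`, or a twin in `T`, or is trumped by a vertex of `T`. -/
def GoodTriadOn (G : SimpleGraph V) (S : Set V) (T : Finset V) : Prop :=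
  ↑T ⊆ S ∧ IsTriad G T ∧
    ∀ v ∈ S, v ∉ T →
      (∃ t1 ∈ T, ∃ t2 ∈ T, t1 ≠ t2 ∧ G.Adj v t1 ∧ G.Adj v t2) ∨
      (∃ t ∈ T, closedNbhdOn G S v = closedNbhdOn G S t) ∨
      (∃ t ∈ T, closedNbhdOn G S v ⊂ closedNbhdOn G S t)

/-- A good triad in `G`. -/
def GoodTriad (G : SimpleGraph V) (T : Finset V) : Prop := GoodTriadOn G Set.univ T

/-- A homogeneous pair of cliques within the induced subgraph on `S`. -/
def IsHomPairOn (G : SimpleGraph V) (S : Set V) (A B : Finset V) : Prop :=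
  ↑A ⊆ S ∧ ↑B ⊆ S ∧ G.IsClique (↑A : Set V) ∧ G.IsClique (↑B : Set V) ∧
    A.Nonempty ∧ B.Nonempty ∧ Disjoint A B ∧ 3 ≤ A.card + B.card ∧
    ∀ v ∈ S, v ∉ A → v ∉ B →
      ((∀ a ∈ A, G.Adj v a) ∨ (∀ a ∈ A, ¬G.Adj v a)) ∧
      ((∀ b ∈ B, G.Adj v b) ∨ (∀ b ∈ B, ¬G.Adj v b))

/-- A homogeneous pair of cliques in `G`. -/
def IsHomPair (G : SimpleGraph V) (A B : Finset V) : Prop := IsHomPairOn G Set.univ A B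

/-- A homogeneous pair of cliques `(A,B)` is skeletal if deleting any single edge
between `A` and `B` strictly decreases the clique number of `G[A ∪ B]`. -/
def IsSkeletalPair (G : SimpleGraph V) (A B : Finset V) : Prop :=
  ∀ a ∈ A, ∀ b ∈ B, G.Adj a b →
    cliqueNumOn (G.deleteEdges {s(a, b)}) (↑A ∪ ↑B) < cliqueNumOn G (↑A ∪ ↑B)

/-- A graph is skeletal if every homogeneous pair of cliques in it is skeletal. -/
def Skeletal (G : SimpleGraph V) : Prop :=
  ∀ A B : Finset V, IsHomPair G A B → IsSkeletalPair G A B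

/-- A linear pair: no induced C₄ between `A` and `B`. -/
def IsLinearPair (G : SimpleGraph V) (A B : Finset V) : Prop :=
  ¬ ∃ a1 ∈ A, ∃ a2 ∈ A, ∃ b1 ∈ B, ∃ b2 ∈ B,
      G.Adj a1 b1 ∧ G.Adj a2 b2 ∧ ¬G.Adj a1 b2 ∧ ¬G.Adj a2 b1

/-- A homogeneous clique. -/
def IsHomogeneousClique [Fintype V] (G : SimpleGraph V) (C : Finset V) : Prop :=
  G.IsClique (↑C : Set V) ∧ 2 ≤ C.card ∧ C.card ≤ Fintype.card V - 1 ∧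
    ∀ v ∉ C, (∀ c ∈ C, G.Adj v c) ∨ (∀ c ∈ C, ¬G.Adj v c)

/-- `X` straddles the three-cliquing `(A,B,C)` if it meets more than one of `A`, `B`, `C`. -/
def Straddles (A B C : Set V) (X : Finset V) : Prop :=
  ((↑X ∩ A).Nonempty ∧ (↑X ∩ B).Nonempty) ∨
  ((↑X ∩ A).Nonempty ∧ (↑X ∩ C).Nonempty) ∨
  ((↑X ∩ B).Nonempty ∧ (↑X ∩ C).Nonempty)

/-- A three-cliqued graph is weakly skeletal if every nonskeletal homogeneous pair
of cliques is straddling. -/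
def WeaklySkeletal (G : SimpleGraph V) (A B C : Set V) : Prop :=
  ∀ X Y : Finset V, IsHomPair G X Y → ¬IsSkeletalPair G X Y →
    Straddles A B C X ∨ Straddles A B C Y

/-- A set of unordered pairs forming a matching (pairwise disjoint non-loop pairs). -/
def IsMatchingSet (M : Set (Sym2 W)) : Prop :=
  (∀ e ∈ M, ¬e.IsDiag) ∧ ∀ e ∈ M, ∀ e' ∈ M, e ≠ e' → ∀ w : W, w ∈ e → w ∉ e'

/-- `G[D]` is a thickening of `H[R]` under the matching `M`, via the fiber map `f`. -/
structure IsThickeningBetween (H : SimpleGraph W) (M : Set (Sym2 W)) (R : Set W)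
    (G : SimpleGraph V) (D : Set V) (f : V → W) : Prop where
  maps_into : ∀ v ∈ D, f v ∈ R
  fibers_nonempty : ∀ w ∈ R, ∃ v ∈ D, f v = w
  fibers_clique : ∀ w : W, G.IsClique {v | v ∈ D ∧ f v = w}
  adj_of_adj : ∀ u ∈ D, ∀ v ∈ D, f u ≠ f v → H.Adj (f u) (f v) → s(f u, f v) ∉ M → G.Adj u v
  nonadj_of_nonadj : ∀ u ∈ D, ∀ v ∈ D, f u ≠ f v → ¬H.Adj (f u) (f v) → ¬G.Adj u v
  semi_adj : ∀ x ∈ R, ∀ y ∈ R, s(x, y) ∈ M →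
    ∃ u ∈ D, ∃ v ∈ D, f u = x ∧ f v = y ∧ G.Adj u v
  semi_nonadj : ∀ x ∈ R, ∀ y ∈ R, s(x, y) ∈ M →
    ∃ u ∈ D, ∃ v ∈ D, f u = x ∧ f v = y ∧ ¬G.Adj u v

/-- `G` is a thickening of `H[R]` under `M`. -/
def IsThickeningOn (H : SimpleGraph W) (M : Set (Sym2 W)) (R : Set W)
    (G : SimpleGraph V) (f : V → W) : Prop :=
  IsThickeningBetween H M R G Set.univ f

/-- `G` is a thickening of `H` under `M`. -/
def IsThickening (H : SimpleGraph W) (M : Set (Sym2 W)) (G : SimpleGraph V) (f : V → W) : Prop :=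
  IsThickeningBetween H M Set.univ G Set.univ f

/-- A graph is antiprismatic if every vertex outside a triad has exactly two
neighbours in it. -/
def Antiprismatic (H : SimpleGraph W) : Prop :=
  ∀ T : Finset W, IsTriad H T → ∀ v ∉ T,
    ∃ t ∈ T, ¬H.Adj v t ∧ ∀ t' ∈ T, t' ≠ t → H.Adj v t'

/-- A changeable matching in an antiprismatic graph. -/
def ChangeableMatching (H : SimpleGraph W) (M : Set (Sym2 W)) : Prop :=
  M ⊆ H.edgeSet ∧ IsMatchingSet M ∧ ∀ M' ⊆ M, Antiprismatic (H.deleteEdges M')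



/-- The icosahedron `G0` on vertices `v0, …, v11`. -/
def icoG0 : SimpleGraph (Fin 12) :=
  SimpleGraph.fromRel (fun i j =>
    (1 ≤ i.val ∧ i.val ≤ 10 ∧ (j.val = i.val % 10 + 1 ∨ j.val = (i.val + 1) % 10 + 1)) ∨
    (i.val = 0 ∧ j.val % 2 = 1 ∧ 1 ≤ j.val ∧ j.val ≤ 10) ∨
    (i.val = 11 ∧ j.val % 2 = 0 ∧ 1 ≤ j.val ∧ j.val ≤ 10))

/-- `G1 = G0 − v11`. -/
def icoG1 : SimpleGraph (Fin 11) :=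
  SimpleGraph.fromRel (fun i j =>
    (1 ≤ i.val ∧ (j.val = i.val % 10 + 1 ∨ j.val = (i.val + 1) % 10 + 1)) ∨
    (i.val = 0 ∧ j.val % 2 = 1))

/-- `G2 = G1 − v10`. -/
def icoG2 : SimpleGraph (Fin 10) :=
  SimpleGraph.fromRel (fun i j =>
    (1 ≤ i.val ∧ (j.val = i.val % 10 + 1 ∨ j.val = (i.val + 1) % 10 + 1)) ∨
    (i.val = 0 ∧ j.val % 2 = 1))

/-- An icosahedral thickening: a proper thickening of `G0` or `G1`, or a thickening of
`G2 ∪ M` under a matching `M ⊆ {v1v4, v6v9}`. -/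
def IsIcosahedralThickening (G : SimpleGraph V) : Prop :=
  (∃ f : V → Fin 12, IsThickening icoG0 ∅ G f) ∨
  (∃ f : V → Fin 11, IsThickening icoG1 ∅ G f) ∨
  (∃ (M : Set (Sym2 (Fin 10))) (f : V → Fin 10),
      M ⊆ {s((1 : Fin 10), 4), s(6, 9)} ∧
      IsThickening (icoG2 ⊔ SimpleGraph.fromEdgeSet M) M G f)

/-! ### Antihat graphs -/

/-- The vertex type of the antihat base graph: `A = {a0,…,ak}`, `B = {b0,…,bk}`,
`C = {c1,…,ck}` (the third component `i` encodes `c_{i+1}`). -/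
abbrev AHV (k : ℕ) : Type := Fin (k + 1) ⊕ Fin (k + 1) ⊕ Fin k

def ahA {k : ℕ} (i : Fin (k + 1)) : AHV k := Sum.inl i
def ahB {k : ℕ} (i : Fin (k + 1)) : AHV k := Sum.inr (Sum.inl i)
def ahC {k : ℕ} (i : Fin k) : AHV k := Sum.inr (Sum.inr i)

/-- The antihat base graph `H`, where `e00` records whether `a0` and `b0` are adjacent. -/
def antihatH (k : ℕ) (e00 : Bool) : SimpleGraph (AHV k) :=
  SimpleGraph.fromRel (fun x y =>
    match x, y with
    | Sum.inl _, Sum.inl _ => True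
    | Sum.inr (Sum.inl _), Sum.inr (Sum.inl _) => True
    | Sum.inr (Sum.inr _), Sum.inr (Sum.inr _) => True
    | Sum.inl i, Sum.inr (Sum.inl j) =>
        (i = j ∧ 1 ≤ i.val) ∨ (i.val = 0 ∧ j.val = 0 ∧ e00 = true)
    | Sum.inl i, Sum.inr (Sum.inr j) => 1 ≤ i.val ∧ i.val ≠ j.val + 1
    | Sum.inr (Sum.inl i), Sum.inr (Sum.inr j) => 1 ≤ i.val ∧ i.val ≠ j.val + 1
    | _, _ => False)

/-- The conditions on the matching `M` of an antihat thickening with deleted set `Xd`. -/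
def AntihatM (k : ℕ) (e00 : Bool) (Xd : Finset (AHV k)) (M : Set (Sym2 (AHV k))) : Prop :=
  IsMatchingSet M ∧
  (∀ e ∈ M, ∀ w : AHV k, w ∈ e → w ∉ Xd) ∧
  (∀ i j : Fin (k + 1), s(ahA i, ahA j) ∉ M) ∧
  (∀ i j : Fin (k + 1), s(ahB i, ahB j) ∉ M) ∧
  (∀ i j : Fin k, s(ahC i, ahC j) ∉ M) ∧
  (e00 = true → s(ahA (0 : Fin (k + 1)), ahB (0 : Fin (k + 1))) ∈ M) ∧
  (∀ i j : Fin (k + 1), 1 ≤ i.val → 1 ≤ j.val → s(ahA i, ahB j) ∈ M →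
      i = j ∧ ∃ c : Fin k, c.val + 1 = i.val ∧ ahC c ∈ Xd) ∧
  (∀ i : Fin (k + 1), ∀ j : Fin k, 1 ≤ i.val → s(ahB i, ahC j) ∈ M →
      i.val = j.val + 1 ∧ ahA i ∈ Xd) ∧
  (∀ i : Fin (k + 1), ∀ j : Fin k, 1 ≤ i.val → s(ahA i, ahC j) ∈ M →
      i.val = j.val + 1 ∧ ahB i ∈ Xd)

/-! ### Strips and generalized 2-joins -/

/-- The induced subgraph on `S` contains an induced `W5` (a 5-wheel). -/
def HasInducedW5On (G : SimpleGraph V) (S : Set V) : Prop :=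
  ∃ w c0 c1 c2 c3 c4 : V,
    w ∈ S ∧ c0 ∈ S ∧ c1 ∈ S ∧ c2 ∈ S ∧ c3 ∈ S ∧ c4 ∈ S ∧
    G.Adj w c0 ∧ G.Adj w c1 ∧ G.Adj w c2 ∧ G.Adj w c3 ∧ G.Adj w c4 ∧
    G.Adj c0 c1 ∧ G.Adj c1 c2 ∧ G.Adj c2 c3 ∧ G.Adj c3 c4 ∧ G.Adj c4 c0 ∧
    c0 ≠ c2 ∧ c0 ≠ c3 ∧ c1 ≠ c3 ∧ c1 ≠ c4 ∧ c2 ≠ c4 ∧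
    ¬G.Adj c0 c2 ∧ ¬G.Adj c0 c3 ∧ ¬G.Adj c1 c3 ∧ ¬G.Adj c1 c4 ∧ ¬G.Adj c2 c4

/-- A generalized 2-join `((X1,Y1),(X2,Y2))` of `G` separating `V1` from `V2`,
with `X1, X2, Y1, Y2` pairwise disjoint except possibly `X1` and `Y1`. -/
structure IsGen2Join [Fintype V] [DecidableEq V] (G : SimpleGraph V)
    (V1 V2 X1 Y1 X2 Y2 : Finset V) : Prop where
  disjV : Disjoint V1 V2
  unionV : V1 ∪ V2 = Finset.univ
  subX1 : X1 ⊆ V1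
  subY1 : Y1 ⊆ V1
  subX2 : X2 ⊆ V2
  subY2 : Y2 ⊆ V2
  cliqueX : G.IsClique (↑X1 ∪ ↑X2 : Set V)
  cliqueY : G.IsClique (↑Y1 ∪ ↑Y2 : Set V)
  cross : ∀ u ∈ V1, ∀ v ∈ V2, G.Adj u v → (u ∈ X1 ∧ v ∈ X2) ∨ (u ∈ Y1 ∧ v ∈ Y2)
  disjX2Y2 : Disjoint X2 Y2

/-- ω'(v): the maximum size of a clique of `H2 = G[V2 ∪ X1 ∪ Y1]` containing `v`
and not intersecting both `X1 ∖ Y1` and `Y1 ∖ X1`. -/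
noncomputable def omegaJ [DecidableEq V] (G : SimpleGraph V) (V2 X1 Y1 : Finset V) (v : V) : ℕ :=
  sSup {n | ∃ s : Finset V, G.IsNClique n s ∧ v ∈ s ∧ s ⊆ V2 ∪ X1 ∪ Y1 ∧
      ¬((∃ x ∈ s, x ∈ X1 ∧ x ∉ Y1) ∧ ∃ y ∈ s, y ∈ Y1 ∧ y ∉ X1)}

/-- γ_ℓ^j(H2) = max over `v ∈ V2 ∪ X1 ∪ Y1` of ⌈(d_G(v)+1+ω'(v))/2⌉. -/
noncomputable def gammaLJ [DecidableEq V] (G : SimpleGraph V) (V2 X1 Y1 : Finset V) : ℕ :=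
  (V2 ∪ X1 ∪ Y1).sup fun v => (degree' G v + 1 + omegaJ G V2 X1 Y1 v + 1) / 2

/-- `(G[V2], X2, Y2)` is an antihat strip. -/
def IsAntihatStripOn (G : SimpleGraph V) (V2 X2 Y2 : Finset V) : Prop :=
  ∃ (k : ℕ) (e00 : Bool) (Xd : Finset (AHV k)) (M : Set (Sym2 (AHV k))) (f : V → AHV k),
    2 ≤ k ∧ ahA (0 : Fin (k + 1)) ∉ Xd ∧ ahB (0 : Fin (k + 1)) ∉ Xd ∧
    (∃ i j : Fin k, i ≠ j ∧ ahC i ∉ Xd ∧ ahC j ∉ Xd) ∧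
    AntihatM k e00 Xd M ∧
    IsThickeningBetween (antihatH k e00 ⊔ SimpleGraph.fromEdgeSet M) M
      ((↑Xd ∪ {ahA (0 : Fin (k + 1)), ahB (0 : Fin (k + 1))} : Set (AHV k))ᶜ)
      G (↑V2 : Set V) f ∧
    (↑X2 : Set V) = {v | v ∈ V2 ∧ ∃ i : Fin (k + 1), 1 ≤ i.val ∧ f v = ahA i ∧ ahA i ∉ Xd} ∧
    (↑Y2 : Set V) = {v | v ∈ V2 ∧ ∃ i : Fin (k + 1), 1 ≤ i.val ∧ f v = ahB i ∧ ahB i ∉ Xd} ∧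
    HasInducedW5On G (↑V2 : Set V)

/-- The base graph of strange strips, on `a1=0, a2=1, b1=2, b2=3, b3=4, c1=5, c2=6`. -/
def strangeH : SimpleGraph (Fin 7) :=
  SimpleGraph.fromEdgeSet
    {s(0, 1), s(2, 3), s(2, 4), s(3, 4), s(5, 6),
     s(0, 2), s(1, 5), s(3, 5), s(4, 5), s(0, 6), s(1, 6), s(2, 6), s(3, 6)}

/-- The matching `{b3c1, b2c2}` of strange strips. -/
def strangeM : Set (Sym2 (Fin 7)) := {s(4, 5), s(3, 6)}

/-- `(G[V2], X2, Y2)` is a strange strip. -/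
def IsStrangeStripOn (G : SimpleGraph V) (V2 X2 Y2 : Finset V) : Prop :=
  ∃ f : V → Fin 7,
    IsThickeningBetween strangeH strangeM Set.univ G (↑V2 : Set V) f ∧
    (↑X2 : Set V) = {v | v ∈ V2 ∧ (f v = 0 ∨ f v = 1)} ∧
    (↑Y2 : Set V) = {v | v ∈ V2 ∧ (f v = 2 ∨ f v = 3 ∨ f v = 4)}

/-- The base graph of gear strips, on `v1, …, v10` (as `0, …, 9`). -/
def gearH : SimpleGraph (Fin 10) :=
  SimpleGraph.fromEdgeSet
    {s(0, 1), s(1, 2), s(2, 3), s(3, 4), s(4, 5), s(0, 5),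
     s(6, 0), s(6, 1), s(6, 2), s(6, 5),
     s(7, 2), s(7, 3), s(7, 4), s(7, 5), s(7, 6),
     s(8, 0), s(8, 2), s(8, 3), s(8, 5), s(8, 6), s(8, 7),
     s(9, 1), s(9, 2), s(9, 4), s(9, 5), s(9, 6), s(9, 7)}

/-- `(G[V2], X2, Y2)` is a gear strip. -/
def IsGearStripOn (G : SimpleGraph V) (V2 X2 Y2 : Finset V) : Prop :=
  ∃ (Xd : Finset (Fin 10)) (M : Set (Sym2 (Fin 10))) (f : V → Fin 10),
    Xd ⊆ {8, 9} ∧ M ⊆ {s((6 : Fin 10), 7)} ∧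
    IsThickeningBetween gearH M ((↑Xd : Set (Fin 10))ᶜ) G (↑V2 : Set V) f ∧
    (↑X2 : Set V) = {v | v ∈ V2 ∧ (f v = 0 ∨ f v = 1)} ∧
    (↑Y2 : Set V) = {v | v ∈ V2 ∧ (f v = 3 ∨ f v = 4)}

/-! ### The two exceptional three-cliqued classes -/

/-- The base graph of Exception I, on `v1, …, v8` (as `0, …, 7`);
`b` records whether `v2v5` is an edge. -/
def exIG (b : Bool) : SimpleGraph (Fin 8) :=
  SimpleGraph.fromEdgeSet
    ({s(0, 1), s(0, 2), s(0, 5), s(0, 6), s(1, 2), s(1, 3), s(2, 3), s(2, 4), s(3, 4),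
      s(3, 5), s(4, 5), s(5, 6), s(6, 7)} ∪ (if b then {s(1, 4)} else ∅))

/-- The matching of Exception I: `{v1v4, v3v6}`, plus `v2v5` when present. -/
def exIM (b : Bool) : Set (Sym2 (Fin 8)) :=
  {s(0, 3), s(2, 5)} ∪ (if b then {s(1, 4)} else ∅)

/-- The base graph of Exception II, on `v1, …, v9` (as `0, …, 8`); `b24` records
whether `v2v4` is an edge and `b75` whether `v7v5` is an edge. -/
def exIIG (b24 b75 : Bool) : SimpleGraph (Fin 9) :=
  SimpleGraph.fromEdgeSet
    ({s(0, 1), s(6, 7),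
      s(2, 3), s(2, 4), s(2, 5), s(2, 8), s(3, 4), s(3, 5), s(3, 8), s(4, 5), s(4, 8), s(5, 8),
      s(0, 2), s(0, 7), s(0, 8), s(5, 7), s(7, 8), s(1, 2), s(5, 6)}
      ∪ (if b24 then {s(1, 3)} else ∅) ∪ (if b75 then {s(4, 6)} else ∅))

/-! ### Circular interval representations -/

/-- Membership in the (closed) arc from `s` to `t` of the circle `[0,1)`,
going in increasing direction and possibly wrapping around. -/
def ArcMem (s t x : ℝ) : Prop := if s ≤ t then s ≤ x ∧ x ≤ t else (s ≤ x ∨ x ≤ t)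

theorem stmt2 {V : Type*} [Fintype V] (G : SimpleGraph V)
    (halpha : ∀ a b c : V, a ≠ b → a ≠ c → b ≠ c → G.Adj a b ∨ G.Adj a c ∨ G.Adj b c) :
    G.chromaticNumber ≤ (gammaLocal G : ℕ∞) := by
  classical
  rcases isEmpty_or_nonempty V with hemp | hne
  · haveI := hemp
    have h0 : G.Colorable 0 := SimpleGraph.Colorable.of_isEmpty (G := G) 0
    calc G.chromaticNumber ≤ ((0 : ℕ) : ℕ∞) := h0.chromaticNumber_le
      _ ≤ (gammaLocal G : ℕ∞) := by exact_mod_cast Nat.zero_le _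
  · set H := Gᶜ with hH
    have htf : ∀ a b c : V, H.Adj a b → H.Adj a c → H.Adj b c → False := by
      intro a b c hab hac hbc
      rw [hH, G.compl_adj] at hab hac hbc
      rcases halpha a b c hab.1 hac.1 hbc.1 with h | h | h
      exacts [hab.2 h, hac.2 h, hbc.2 h]
    obtain ⟨v, hv, I, hIsub, hvI, hindep, hineq⟩ :=
      S2x.key htf (Fintype.card V) Finset.univ (by rw [Finset.card_univ]) Finset.univ_nonempty
    obtain ⟨m, hm, hmc⟩ := S2x.exists_max H Finset.univ
    set e := Fintype.equivFin V with he
    set R := Finset.univ.filter (fun x : V => e (m x) < e x) with hR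
    set B := Finset.univ.filter (fun x : V => ¬ e (m x) < e x) with hB
    have hRB : B = Finset.univ \ R := by rw [hB, hR, Finset.filter_not]
    have hmne : ∀ x : V, e (m x) < e x → m x ≠ x := by
      intro x hlt heq
      rw [heq] at hlt
      exact lt_irrefl _ hlt
    have hsuppeq : S2x.msupp m = R ∪ R.image m := by
      ext x
      rw [S2x.mem_msupp, Finset.mem_union, hR]
      constructor
      · intro hx
        rcases lt_or_gt_of_ne (fun hexx : e (m x) = e x => hx (e.injective hexx)) with h1 | h1
        · exact Or.inl (Finset.mem_filter.2 ⟨Finset.mem_univ _, h1⟩)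
        · refine Or.inr (Finset.mem_image.2 ⟨m x, Finset.mem_filter.2 ⟨Finset.mem_univ _, ?_⟩, ?_⟩)
          · rw [hm.1]
            exact h1
          · rw [hm.1]
      · rintro (h1 | h1)
        · exact hmne x (Finset.mem_filter.1 h1).2
        · obtain ⟨c, hc, rfl⟩ := Finset.mem_image.1 h1
          have h2 := hmne c (Finset.mem_filter.1 hc).2
          rw [hm.1]
          exact fun e2 => h2 e2.symm
    have hdisjR : Disjoint R (R.image m) := by
      rw [Finset.disjoint_left]
      intro y hy hy2
      obtain ⟨c, hc, rfl⟩ := Finset.mem_image.1 hy2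
      have h1 := (Finset.mem_filter.1 hy).2
      have h2 := (Finset.mem_filter.1 hc).2
      rw [hm.1] at h1
      exact lt_asymm h1 h2
    have himgcard : (R.image m).card = R.card :=
      Finset.card_image_of_injective _ hm.inj
    have h2r : S2x.nuu H Finset.univ = R.card + R.card := by
      rw [← hmc, hsuppeq, Finset.card_union_of_disjoint hdisjR, himgcard]
    -- the coloring
    have hcolmem : ∀ x : V, (if e (m x) < e x then m x else x) ∈ B := by
      intro x
      by_cases hx : e (m x) < e x
      · rw [if_pos hx, hB]
        refine Finset.mem_filter.2 ⟨Finset.mem_univ _, ?_⟩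
        rw [hm.1]
        exact lt_asymm hx
      · rw [if_neg hx, hB]
        exact Finset.mem_filter.2 ⟨Finset.mem_univ _, hx⟩
    have hvalid : ∀ {a b : V}, G.Adj a b →
        (⟨_, hcolmem a⟩ : {y // y ∈ B}) ≠ ⟨_, hcolmem b⟩ := by
      intro a b hab heq
      have hval : (if e (m a) < e a then m a else a) = (if e (m b) < e b then m b else b) :=
        congrArg Subtype.val heq
      have hnadj : ∀ x : V, m x ≠ x → ¬G.Adj x (m x) := by
        intro x hx
        have := (hm.2 x hx).2
        rw [hH, G.compl_adj] at this
        exact this.2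
      by_cases ca : e (m a) < e a <;> by_cases cb : e (m b) < e b
      · rw [if_pos ca, if_pos cb] at hval
        exact hab.ne (hm.inj hval)
      · rw [if_pos ca, if_neg cb] at hval
        exact hnadj a (hmne a ca) (hval ▸ hab)
      · rw [if_neg ca, if_pos cb] at hval
        exact hnadj b (hmne b cb) (hval ▸ hab.symm)
      · rw [if_neg ca, if_neg cb] at hval
        exact hab.ne hval
    have hcolorable : G.Colorable (Fintype.card {y // y ∈ B}) :=
      (SimpleGraph.Coloring.mk (fun x => (⟨_, hcolmem x⟩ : {y // y ∈ B}))
        (fun hab => hvalid hab)).colorable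
    rw [Fintype.card_coe] at hcolorable
    have hchrom : G.chromaticNumber ≤ (B.card : ℕ∞) := hcolorable.chromaticNumber_le
    -- degree identity
    have hdegset : (G.neighborSet v) = ↑(Finset.univ.filter (fun x : V => G.Adj v x)) := by
      ext x
      simp [SimpleGraph.mem_neighborSet]
    have hdG : degree' G v = (Finset.univ.filter (fun x : V => G.Adj v x)).card := by
      rw [degree', hdegset, Set.ncard_coe_finset]
    have hfiltH : Finset.univ.filter (fun x : V => H.Adj v x) =
        Finset.univ \ insert v (Finset.univ.filter (fun x : V => G.Adj v x)) := by
      ext x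
      simp only [Finset.mem_filter, Finset.mem_univ, true_and, Finset.mem_sdiff,
        Finset.mem_insert, hH, G.compl_adj]
      constructor
      · rintro ⟨h1, h2⟩ (rfl | h3)
        · exact h1 rfl
        · exact h2 h3
      · intro h3
        exact ⟨fun e2 => h3 (Or.inl e2.symm), fun ha => h3 (Or.inr ha)⟩
    have hvnot : v ∉ Finset.univ.filter (fun x : V => G.Adj v x) := by
      simp
    have hdeg : (Finset.univ.filter (fun x : V => H.Adj v x)).card + degree' G v + 1
        = Fintype.card V := by
      rw [hfiltH, Finset.card_sdiff_of_subset (Finset.subset_univ _), Finset.card_insert_of_notMem hvnot,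
        Finset.card_univ, hdG]
      have hle : (insert v (Finset.univ.filter (fun x : V => G.Adj v x))).card
          ≤ Fintype.card V := by
        rw [← Finset.card_univ]
        exact Finset.card_le_card (Finset.subset_univ _)
      rw [Finset.card_insert_of_notMem hvnot] at hle
      omega
    -- bounding omegaAt
    have homega : I.card ≤ omegaAt G v := by
      apply le_csSup
      · refine ⟨Fintype.card V, fun k hk => ?_⟩
        obtain ⟨s, hs, -⟩ := hk
        rw [← hs.2]
        exact (Finset.card_le_univ s).trans_eq Finset.card_univ
      · refine ⟨I, (G.isNClique_iff).2 ⟨?_, rfl⟩, hvI⟩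
        intro x hx y hy hxy
        have h2 := hindep x hx y hy hxy
        rw [hH, G.compl_adj] at h2
        push_neg at h2
        exact h2 hxy
    have hnuule : S2x.nuu H Finset.univ ≤ Fintype.card V := by
      rw [← hmc, ← Finset.card_univ]
      exact Finset.card_le_card (Finset.subset_univ _)
    have hBcard : B.card = Fintype.card V - R.card := by
      rw [hRB, Finset.card_sdiff_of_subset (Finset.subset_univ _), Finset.card_univ]
    have hgam1 : B.card ≤ gammaLocalAt G v := by
      rw [gammaLocalAt, Nat.le_div_iff_mul_le (by norm_num : 0 < 2)]
      rw [Finset.card_univ] at hineq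
      omega
    have hgam2 : gammaLocalAt G v ≤ gammaLocal G := by
      apply le_csSup
      · apply Set.Finite.bddAbove
        apply (Set.finite_range (gammaLocalAt G)).subset
        rintro k ⟨x, hx⟩
        exact ⟨x, hx.symm⟩
      · exact ⟨v, rfl⟩
    calc G.chromaticNumber ≤ (B.card : ℕ∞) := hchrom
      _ ≤ (gammaLocal G : ℕ∞) := by exact_mod_cast hgam1.trans hgam2

end Paper
end

section
/- Let G be a finite simple graph that is not skeletal. Then there exists a spanning subgraph G' of G (same vertex set, E(G') ⊆ E(G)) such that: G' is skeletal; χ(G') = χ(G); if G is claw-free then G' is claw-free; if G is quasi-line then G' is quasi-line; and if the complement of G is 3-colourable then the complement of G' is 3-colourable. -/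
open SimpleGraph

namespace Paper

variable {V : Type*} {W : Type*}

section AuxStmt3

set_option linter.unusedSectionVars false
set_option linter.unusedVariables false
set_option maxHeartbeats 1000000

variable [Fintype V] [DecidableEq V] {G : SimpleGraph V} {A B : Finset V} {a b : V}

lemma cliqueNumOn_bddAbove (G : SimpleGraph V) (S : Set V) :
    BddAbove {n | ∃ s : Finset V, ↑s ⊆ S ∧ G.IsNClique n s} := by
  refine ⟨Fintype.card V, fun n hn => ?_⟩
  obtain ⟨s, _, hs⟩ := hn
  simpa [← hs.2, Finset.card_univ] using Finset.card_le_univ s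

lemma cliqueNumOn_nonempty (G : SimpleGraph V) (S : Set V) :
    {n | ∃ s : Finset V, ↑s ⊆ S ∧ G.IsNClique n s}.Nonempty :=
  ⟨0, ∅, by simp, by simp [SimpleGraph.IsNClique, SimpleGraph.IsClique]⟩

lemma le_cliqueNumOn {S : Set V} {s : Finset V} {n : ℕ} (h1 : ↑s ⊆ S)
    (h2 : G.IsNClique n s) : n ≤ cliqueNumOn G S :=
  le_csSup (cliqueNumOn_bddAbove G S) ⟨s, h1, h2⟩

lemma cliqueNumOn_exists (G : SimpleGraph V) (S : Set V) :
    ∃ s : Finset V, ↑s ⊆ S ∧ G.IsNClique (cliqueNumOn G S) s :=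
  Nat.sSup_mem (cliqueNumOn_nonempty G S) (cliqueNumOn_bddAbove G S)

lemma cliqueNumOn_le {S : Set V} {m : ℕ}
    (h : ∀ n, ∀ s : Finset V, ↑s ⊆ S → G.IsNClique n s → n ≤ m) :
    cliqueNumOn G S ≤ m :=
  csSup_le (cliqueNumOn_nonempty G S) (fun n ⟨s, h1, h2⟩ => h n s h1 h2)

-- homogeneity helpers
lemma homA' (hp : IsHomPair G A B) {u x x' : V} (hu : u ∉ A) (hu' : u ∉ B)
    (hx : x ∈ A) (hadj : G.Adj u x) (hx' : x' ∈ A) : G.Adj u x' := by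
  rcases (hp.2.2.2.2.2.2.2.2 u (Set.mem_univ u) hu hu').1 with h | h
  · exact h x' hx'
  · exact absurd hadj (h x hx)

lemma homB' (hp : IsHomPair G A B) {u x x' : V} (hu : u ∉ A) (hu' : u ∉ B)
    (hx : x ∈ B) (hadj : G.Adj u x) (hx' : x' ∈ B) : G.Adj u x' := by
  rcases (hp.2.2.2.2.2.2.2.2 u (Set.mem_univ u) hu hu').2 with h | h
  · exact h x' hx'
  · exact absurd hadj (h x hx)

lemma antiA' (hp : IsHomPair G A B) {u x x' : V} (hu : u ∉ A) (hu' : u ∉ B)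
    (hx : x ∈ A) (hadj : ¬G.Adj u x) (hx' : x' ∈ A) : ¬G.Adj u x' :=
  fun h => hadj (homA' hp hu hu' hx' h hx)

lemma antiB' (hp : IsHomPair G A B) {u x x' : V} (hu : u ∉ A) (hu' : u ∉ B)
    (hx : x ∈ B) (hadj : ¬G.Adj u x) (hx' : x' ∈ B) : ¬G.Adj u x' :=
  fun h => hadj (homB' hp hu hu' hx' h hx)

lemma adj_del_iff' (G : SimpleGraph V) (a b x y : V) :
    (G.deleteEdges {s(a, b)}).Adj x y ↔
      G.Adj x y ∧ ¬(x = a ∧ y = b) ∧ ¬(x = b ∧ y = a) := by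
  simp only [SimpleGraph.deleteEdges_adj, Set.mem_singleton_iff, Sym2.eq_iff]
  tauto

lemma del_le (G : SimpleGraph V) (a b : V) : G.deleteEdges {s(a, b)} ≤ G :=
  SimpleGraph.deleteEdges_le _

-- Lemma A
lemma drop_of_complete' (hp : IsHomPair G A B) (ha : a ∈ A) (hb : b ∈ B)
    (hcomp : ∀ x ∈ A, ∀ y ∈ B, G.Adj x y) :
    cliqueNumOn (G.deleteEdges {s(a, b)}) (↑A ∪ ↑B) < cliqueNumOn G (↑A ∪ ↑B) := by
  obtain ⟨_, _, hcA, hcB, _, _, hdisj, hcard3, _⟩ := hp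
  have hne : a ≠ b := fun h => (Finset.disjoint_left.mp hdisj ha) (h ▸ hb)
  have hAB : G.IsClique (↑(A ∪ B) : Set V) := by
    intro x hx y hy hxy
    simp only [Finset.coe_union, Set.mem_union, Finset.mem_coe] at hx hy
    rcases hx with hx | hx <;> rcases hy with hy | hy
    · exact hcA hx hy hxy
    · exact hcomp x hx y hy
    · exact (hcomp y hy x hx).symm
    · exact hcB hx hy hxy
  have hcardU : (A ∪ B).card = A.card + B.card := Finset.card_union_of_disjoint hdisj
  have hge : A.card + B.card ≤ cliqueNumOn G (↑A ∪ ↑B) := by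
    have := le_cliqueNumOn (G := G) (S := (↑A ∪ ↑B : Set V)) (s := A ∪ B)
      (by rw [Finset.coe_union]) ⟨hAB, hcardU⟩
    omega
  have hle : cliqueNumOn (G.deleteEdges {s(a, b)}) (↑A ∪ ↑B) ≤ A.card + B.card - 1 := by
    apply cliqueNumOn_le
    intro n s hsub hs
    have hsub' : s ⊆ A ∪ B := by
      intro x hx
      have := hsub hx
      simpa [Finset.mem_union] using this
    have hnab : ¬(a ∈ s ∧ b ∈ s) := by
      rintro ⟨has, hbs⟩
      have := hs.1 has hbs hne
      rw [adj_del_iff' G a b a b] at this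
      exact this.2.1 ⟨rfl, rfl⟩
    have : s.card ≤ (A ∪ B).card - 1 := by
      rcases not_and_or.mp hnab with h | h
      · have : s ⊆ (A ∪ B).erase a := fun x hx =>
          Finset.mem_erase.mpr ⟨fun he => h (he ▸ hx), hsub' hx⟩
        calc s.card ≤ ((A ∪ B).erase a).card := Finset.card_le_card this
          _ = (A ∪ B).card - 1 := Finset.card_erase_of_mem (by simp [ha])
      · have : s ⊆ (A ∪ B).erase b := fun x hx =>
          Finset.mem_erase.mpr ⟨fun he => h (he ▸ hx), hsub' hx⟩
        calc s.card ≤ ((A ∪ B).erase b).card := Finset.card_le_card this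
          _ = (A ∪ B).card - 1 := Finset.card_erase_of_mem (by simp [hb])
    have hn := hs.2
    omega
  omega


lemma claw_helper (hp : IsHomPair G A B) (ha : a ∈ A) (hb : b ∈ B) (hab : G.Adj a b)
    (hns : ¬ cliqueNumOn (G.deleteEdges {s(a, b)}) (↑A ∪ ↑B) < cliqueNumOn G (↑A ∪ ↑B))
    (hcf : ClawFree G) {v z : V}
    (hva : G.Adj v a) (hvb : G.Adj v b) (hvz : G.Adj v z)
    (n1 : ¬(G.deleteEdges {s(a, b)}).Adj a z) (n2 : ¬(G.deleteEdges {s(a, b)}).Adj b z)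
    (hzna : z ≠ a) (hznb : z ≠ b) : False := by
  have hne : a ≠ b := G.ne_of_adj hab
  have hza : ¬G.Adj z a := fun h =>
    n1 ((adj_del_iff' G a b a z).mpr ⟨h.symm, fun hh => hznb hh.2, fun hh => hne hh.1⟩)
  have hzb : ¬G.Adj z b := fun h =>
    n2 ((adj_del_iff' G a b b z).mpr ⟨h.symm, fun hh => hne hh.1.symm, fun hh => hzna hh.2⟩)
  have hcA := hp.2.2.1
  have hcB := hp.2.2.2.1
  have hdisj := hp.2.2.2.2.2.2.1
  have hzA' : z ∉ A := fun h => hza (hcA h ha hzna)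
  have hzB' : z ∉ B := fun h => hzb (hcB h hb hznb)
  have hzA : ∀ x ∈ A, ¬G.Adj z x := fun x hx => antiA' hp hzA' hzB' ha hza hx
  have hzB : ∀ y ∈ B, ¬G.Adj z y := fun y hy => antiB' hp hzA' hzB' hb hzb hy
  have hvA' : v ∉ A := fun h => hzA v h hvz.symm
  have hvB' : v ∉ B := fun h => hzB v h hvz.symm
  have hvA : ∀ x ∈ A, G.Adj v x := fun x hx => homA' hp hvA' hvB' ha hva hx
  have hvB : ∀ y ∈ B, G.Adj v y := fun y hy => homB' hp hvA' hvB' hb hvb hy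
  have hcomp : ∀ x ∈ A, ∀ y ∈ B, G.Adj x y := by
    intro x hx y hy
    by_contra hn
    exact hcf ⟨v, x, y, z, hvA x hx, hvB y hy, hvz, hn,
      fun h => hzA x hx h.symm, fun h => hzB y hy h.symm,
      fun h => Finset.disjoint_left.mp hdisj hx (h ▸ hy),
      fun h => hzA' (h ▸ hx), fun h => hzB' (h ▸ hy)⟩
  exact hns (drop_of_complete' hp ha hb hcomp)

lemma clawfree_del (hp : IsHomPair G A B) (ha : a ∈ A) (hb : b ∈ B) (hab : G.Adj a b)
    (hns : ¬ cliqueNumOn (G.deleteEdges {s(a, b)}) (↑A ∪ ↑B) < cliqueNumOn G (↑A ∪ ↑B))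
    (hcf : ClawFree G) : ClawFree (G.deleteEdges {s(a, b)}) := by
  rintro ⟨v, x, y, z, h1, h2, h3, n12, n13, n23, d12, d13, d23⟩
  have key : ∀ u w : V, ¬(G.deleteEdges {s(a, b)}).Adj u w → G.Adj u w →
      (u = a ∧ w = b) ∨ (u = b ∧ w = a) := by
    intro u w h1 h2
    rw [adj_del_iff' G a b u w] at h1
    tauto
  have h1G : G.Adj v x := ((adj_del_iff' G a b v x).mp h1).1
  have h2G : G.Adj v y := ((adj_del_iff' G a b v y).mp h2).1
  have h3G : G.Adj v z := ((adj_del_iff' G a b v z).mp h3).1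
  by_cases c12 : G.Adj x y
  · rcases key x y n12 c12 with ⟨hxa, hyb⟩ | ⟨hxb, hya⟩
    · exact claw_helper hp ha hb hab hns hcf (hxa ▸ h1G) (hyb ▸ h2G) h3G
        (fun h => n13 (hxa ▸ h)) (fun h => n23 (hyb ▸ h))
        (fun h => d13 (hxa.trans h.symm)) (fun h => d23 (hyb.trans h.symm))
    · exact claw_helper hp ha hb hab hns hcf (hya ▸ h2G) (hxb ▸ h1G) h3G
        (fun h => n23 (hya ▸ h)) (fun h => n13 (hxb ▸ h))
        (fun h => d23 (hya.trans h.symm)) (fun h => d13 (hxb.trans h.symm))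
  · by_cases c13 : G.Adj x z
    · rcases key x z n13 c13 with ⟨hxa, hzb⟩ | ⟨hxb, hza⟩
      · exact claw_helper hp ha hb hab hns hcf (hxa ▸ h1G) (hzb ▸ h3G) h2G
          (fun h => n12 (hxa ▸ h)) (fun h => (n23 (hzb ▸ h.symm)))
          (fun h => d12 (hxa.trans h.symm)) (fun h => d23 (h.trans hzb.symm))
      · exact claw_helper hp ha hb hab hns hcf (hza ▸ h3G) (hxb ▸ h1G) h2G
          (fun h => (n23 (hza ▸ h.symm))) (fun h => n12 (hxb ▸ h))
          (fun h => d23 (h.trans hza.symm)) (fun h => d12 (hxb.trans h.symm))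
    · by_cases c23 : G.Adj y z
      · rcases key y z n23 c23 with ⟨hya, hzb⟩ | ⟨hyb, hza⟩
        · exact claw_helper hp ha hb hab hns hcf (hya ▸ h2G) (hzb ▸ h3G) h1G
            (fun h => (n12 (hya ▸ h.symm))) (fun h => (n13 (hzb ▸ h.symm)))
            (fun h => d12 (h.trans hya.symm)) (fun h => d13 (h.trans hzb.symm))
        · exact claw_helper hp ha hb hab hns hcf (hza ▸ h3G) (hyb ▸ h2G) h1G
            (fun h => (n13 (hza ▸ h.symm))) (fun h => (n12 (hyb ▸ h.symm)))
            (fun h => d13 (h.trans hza.symm)) (fun h => d12 (h.trans hyb.symm))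
      · exact hcf ⟨v, x, y, z, h1G, h2G, h3G, c12, c13, c23, d12, d13, d23⟩

lemma clawfree_of_quasiline {G : SimpleGraph V} (hql : QuasiLine G) : ClawFree G := by
  rintro ⟨v, x, y, z, h1, h2, h3, n12, n13, n23, d12, d13, d23⟩
  obtain ⟨S, T, hS, hT, hcov⟩ := hql v
  have hx := hcov (by simpa using h1)
  have hy := hcov (by simpa using h2)
  have hz := hcov (by simpa using h3)
  rcases hx with hx | hx <;> rcases hy with hy | hy <;> rcases hz with hz | hz <;>
    first
      | exact n12 (hS hx hy d12)
      | exact n13 (hS hx hz d13)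
      | exact n23 (hS hy hz d23)
      | exact n12 (hT hx hy d12)
      | exact n13 (hT hx hz d13)
      | exact n23 (hT hy hz d23)

lemma clique_del_of_not_pair {C : Set V} (hC : G.IsClique C)
    (h : ¬(a ∈ C ∧ b ∈ C)) : (G.deleteEdges {s(a, b)}).IsClique C := by
  intro x hx y hy hxy
  rw [adj_del_iff' G a b x y]
  refine ⟨hC hx hy hxy, ?_, ?_⟩
  · rintro ⟨rfl, rfl⟩; exact h ⟨hx, hy⟩
  · rintro ⟨rfl, rfl⟩; exact h ⟨hy, hx⟩

lemma ql_core (hp : IsHomPair G A B) (ha : a ∈ A) (hb : b ∈ B) (hab : G.Adj a b)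
    (hns : ¬ cliqueNumOn (G.deleteEdges {s(a, b)}) (↑A ∪ ↑B) < cliqueNumOn G (↑A ∪ ↑B))
    (hcf' : ClawFree (G.deleteEdges {s(a, b)})) (v : V) (S T : Set V)
    (hS : G.IsClique S) (hT : G.IsClique T)
    (hSsub : S ⊆ G.neighborSet v) (hTsub : T ⊆ G.neighborSet v)
    (hcov : G.neighborSet v ⊆ S ∪ T) (haS : a ∈ S) (hbS : b ∈ S) :
    ∃ S' T' : Set V, (G.deleteEdges {s(a, b)}).IsClique S' ∧
      (G.deleteEdges {s(a, b)}).IsClique T' ∧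
      (G.deleteEdges {s(a, b)}).neighborSet v ⊆ S' ∪ T' := by
  have hcA := hp.2.2.1
  have hcB := hp.2.2.2.1
  have hdisj := hp.2.2.2.2.2.2.1
  have hne : a ≠ b := G.ne_of_adj hab
  have hva : G.Adj v a := hSsub haS
  have hvb : G.Adj v b := hSsub hbS
  have hNsub : (G.deleteEdges {s(a, b)}).neighborSet v ⊆ G.neighborSet v := by
    intro u hu
    exact ((adj_del_iff' G a b v u).mp hu).1
  -- S-external vertices are complete to A and B
  have hSext : ∀ u ∈ S, u ∉ A → u ∉ B → (∀ x ∈ A, G.Adj u x) ∧ ∀ y ∈ B, G.Adj u y := by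
    intro u hu huA huB
    constructor
    · intro x hx
      rcases eq_or_ne u a with rfl | hua
      · exact absurd ha huA
      · exact homA' hp huA huB ha (hS hu haS hua) hx
    · intro y hy
      rcases eq_or_ne u b with rfl | hub
      · exact absurd hb huB
      · exact homB' hp huA huB hb (hS hu hbS hub) hy
  by_cases hostA : ∀ u ∈ T, u ∉ A → u ∉ B → ∀ x ∈ A, G.Adj u x
  · refine ⟨(T \ (↑A ∪ ↑B)) ∪ ((↑A : Set V) ∩ G.neighborSet v),
      (S \ (↑A ∪ ↑B)) ∪ ((↑B : Set V) ∩ G.neighborSet v), ?_, ?_, ?_⟩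
    · intro x hx y hy hxy
      rw [adj_del_iff' G a b x y]
      have adj : G.Adj x y := by
        rcases hx with ⟨hxT, hxn⟩ | ⟨hxA, _⟩ <;> rcases hy with ⟨hyT, hyn⟩ | ⟨hyA, _⟩
        · exact hT hxT hyT hxy
        · simp only [Set.mem_union, Finset.mem_coe, not_or] at hxn
          exact hostA x hxT hxn.1 hxn.2 y hyA
        · simp only [Set.mem_union, Finset.mem_coe, not_or] at hyn
          exact (hostA y hyT hyn.1 hyn.2 x hxA).symm
        · exact hcA hxA hyA hxy
      refine ⟨adj, ?_, ?_⟩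
      · rintro ⟨rfl, rfl⟩
        rcases hy with ⟨_, hyn⟩ | ⟨hyA, _⟩
        · exact hyn (by simp [hb])
        · exact Finset.disjoint_left.mp hdisj hyA hb
      · rintro ⟨rfl, rfl⟩
        rcases hx with ⟨_, hxn⟩ | ⟨hxA, _⟩
        · exact hxn (by simp [hb])
        · exact Finset.disjoint_left.mp hdisj hxA hb
    · intro x hx y hy hxy
      rw [adj_del_iff' G a b x y]
      have adj : G.Adj x y := by
        rcases hx with ⟨hxS, hxn⟩ | ⟨hxB, _⟩ <;> rcases hy with ⟨hyS, hyn⟩ | ⟨hyB, _⟩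
        · exact hS hxS hyS hxy
        · simp only [Set.mem_union, Finset.mem_coe, not_or] at hxn
          exact (hSext x hxS hxn.1 hxn.2).2 y hyB
        · simp only [Set.mem_union, Finset.mem_coe, not_or] at hyn
          exact ((hSext y hyS hyn.1 hyn.2).2 x hxB).symm
        · exact hcB hxB hyB hxy
      refine ⟨adj, ?_, ?_⟩
      · rintro ⟨rfl, rfl⟩
        rcases hx with ⟨_, hxn⟩ | ⟨hxB, _⟩
        · exact hxn (by simp [ha])
        · exact Finset.disjoint_left.mp hdisj ha hxB
      · rintro ⟨rfl, rfl⟩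
        rcases hy with ⟨_, hyn⟩ | ⟨hyB, _⟩
        · exact hyn (by simp [ha])
        · exact Finset.disjoint_left.mp hdisj ha hyB
    · intro u hu
      have huN : u ∈ G.neighborSet v := hNsub hu
      by_cases huA : u ∈ A
      · exact Or.inl (Or.inr ⟨huA, huN⟩)
      by_cases huB : u ∈ B
      · exact Or.inr (Or.inr ⟨huB, huN⟩)
      rcases hcov huN with h | h
      · exact Or.inr (Or.inl ⟨h, by simp [huA, huB]⟩)
      · exact Or.inl (Or.inl ⟨h, by simp [huA, huB]⟩)
  · by_cases hostB : ∀ u ∈ T, u ∉ A → u ∉ B → ∀ y ∈ B, G.Adj u y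
    · refine ⟨(T \ (↑A ∪ ↑B)) ∪ ((↑B : Set V) ∩ G.neighborSet v),
        (S \ (↑A ∪ ↑B)) ∪ ((↑A : Set V) ∩ G.neighborSet v), ?_, ?_, ?_⟩
      · intro x hx y hy hxy
        rw [adj_del_iff' G a b x y]
        have adj : G.Adj x y := by
          rcases hx with ⟨hxT, hxn⟩ | ⟨hxB, _⟩ <;> rcases hy with ⟨hyT, hyn⟩ | ⟨hyB, _⟩
          · exact hT hxT hyT hxy
          · simp only [Set.mem_union, Finset.mem_coe, not_or] at hxn
            exact hostB x hxT hxn.1 hxn.2 y hyB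
          · simp only [Set.mem_union, Finset.mem_coe, not_or] at hyn
            exact (hostB y hyT hyn.1 hyn.2 x hxB).symm
          · exact hcB hxB hyB hxy
        refine ⟨adj, ?_, ?_⟩
        · rintro ⟨rfl, rfl⟩
          rcases hx with ⟨_, hxn⟩ | ⟨hxB, _⟩
          · exact hxn (by simp [ha])
          · exact Finset.disjoint_left.mp hdisj ha hxB
        · rintro ⟨rfl, rfl⟩
          rcases hy with ⟨_, hyn⟩ | ⟨hyB, _⟩
          · exact hyn (by simp [ha])
          · exact Finset.disjoint_left.mp hdisj ha hyB
      · intro x hx y hy hxy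
        rw [adj_del_iff' G a b x y]
        have adj : G.Adj x y := by
          rcases hx with ⟨hxS, hxn⟩ | ⟨hxA, _⟩ <;> rcases hy with ⟨hyS, hyn⟩ | ⟨hyA, _⟩
          · exact hS hxS hyS hxy
          · simp only [Set.mem_union, Finset.mem_coe, not_or] at hxn
            exact (hSext x hxS hxn.1 hxn.2).1 y hyA
          · simp only [Set.mem_union, Finset.mem_coe, not_or] at hyn
            exact ((hSext y hyS hyn.1 hyn.2).1 x hxA).symm
          · exact hcA hxA hyA hxy
        refine ⟨adj, ?_, ?_⟩
        · rintro ⟨rfl, rfl⟩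
          rcases hy with ⟨_, hyn⟩ | ⟨hyA, _⟩
          · exact hyn (by simp [hb])
          · exact Finset.disjoint_left.mp hdisj hyA hb
        · rintro ⟨rfl, rfl⟩
          rcases hx with ⟨_, hxn⟩ | ⟨hxA, _⟩
          · exact hxn (by simp [hb])
          · exact Finset.disjoint_left.mp hdisj hxA hb
      · intro u hu
        have huN : u ∈ G.neighborSet v := hNsub hu
        by_cases huA : u ∈ A
        · exact Or.inr (Or.inr ⟨huA, huN⟩)
        by_cases huB : u ∈ B
        · exact Or.inl (Or.inr ⟨huB, huN⟩)
        rcases hcov huN with h | h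
        · exact Or.inr (Or.inl ⟨h, by simp [huA, huB]⟩)
        · exact Or.inl (Or.inl ⟨h, by simp [huA, huB]⟩)
    · exfalso
      push_neg at hostA hostB
      obtain ⟨u1, hu1T, hu1A, hu1B, x1, hx1, hnu1⟩ := hostA
      obtain ⟨u2, hu2T, hu2A, hu2B, y1, hy1, hnu2⟩ := hostB
      have hu1anti : ∀ x ∈ A, ¬G.Adj u1 x := fun x hx => antiA' hp hu1A hu1B hx1 hnu1 hx
      have hu2anti : ∀ y ∈ B, ¬G.Adj u2 y := fun y hy => antiB' hp hu2A hu2B hy1 hnu2 hy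
      have hvu1 : G.Adj v u1 := hTsub hu1T
      have hvu2 : G.Adj v u2 := hTsub hu2T
      rcases eq_or_ne u1 u2 with rfl | hne12
      · refine hcf' ⟨v, a, b, u1, ?_, ?_, ?_, ?_, ?_, ?_, hne, ?_, ?_⟩
        · exact (adj_del_iff' G a b v a).mpr ⟨hva, fun h => hne h.2,
            fun h => G.loopless.irrefl b (h.1 ▸ hvb)⟩
        · exact (adj_del_iff' G a b v b).mpr ⟨hvb, fun h => G.loopless.irrefl a (h.1 ▸ hva),
            fun h => hne h.2.symm⟩
        · exact (adj_del_iff' G a b v u1).mpr ⟨hvu1, fun h => hu1B (h.2 ▸ hb),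
            fun h => hu1A (h.2 ▸ ha)⟩
        · intro h
          exact ((adj_del_iff' G a b a b).mp h).2.1 ⟨rfl, rfl⟩
        · intro h
          exact hu1anti a ha (((adj_del_iff' G a b a u1).mp h).1).symm
        · intro h
          exact hu2anti b hb (((adj_del_iff' G a b b u1).mp h).1).symm
        · exact fun h => hu1A (h ▸ ha)
        · exact fun h => hu1B (h ▸ hb)
      · have hvA' : v ∉ A := fun h => hu1anti v h hvu1.symm
        have hvB' : v ∉ B := fun h => hu2anti v h hvu2.symm
        have hvA : ∀ x ∈ A, G.Adj v x := fun x hx => homA' hp hvA' hvB' ha hva hx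
        have hvB : ∀ y ∈ B, G.Adj v y := fun y hy => homB' hp hvA' hvB' hb hvb hy
        have hAS : ∀ x ∈ A, x ∈ S := by
          intro x hx
          rcases hcov (hvA x hx) with h | h
          · exact h
          · exact absurd (hT h hu1T (fun he => hu1A (he ▸ hx))) (fun hh => hu1anti x hx hh.symm)
        have hBS : ∀ y ∈ B, y ∈ S := by
          intro y hy
          rcases hcov (hvB y hy) with h | h
          · exact h
          · exact absurd (hT h hu2T (fun he => hu2B (he ▸ hy))) (fun hh => hu2anti y hy hh.symm)
        have hcomp : ∀ x ∈ A, ∀ y ∈ B, G.Adj x y := by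
          intro x hx y hy
          exact hS (hAS x hx) (hBS y hy) (fun he => Finset.disjoint_left.mp hdisj hx (he ▸ hy))
        exact hns (drop_of_complete' hp ha hb hcomp)

lemma compl_colorable_del (hp : IsHomPair G A B) (ha : a ∈ A) (hb : b ∈ B)
    (hab : G.Adj a b)
    (hns : ¬ cliqueNumOn (G.deleteEdges {s(a, b)}) (↑A ∪ ↑B) < cliqueNumOn G (↑A ∪ ↑B))
    (h3 : Gᶜ.Colorable 3) : (G.deleteEdges {s(a, b)})ᶜ.Colorable 3 := by
  obtain ⟨C⟩ := h3
  set c : V → Fin 3 := fun u => C u with hc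
  have hfib : ∀ x y : V, x ≠ y → c x = c y → G.Adj x y := by
    intro x y hxy hcxy
    by_contra hn
    exact C.valid ((compl_adj G x y).mpr ⟨hxy, hn⟩) hcxy
  have hdisj := hp.2.2.2.2.2.2.1
  have hcA := hp.2.2.1
  have hcB := hp.2.2.2.1
  by_cases hcase : ∃ x ∈ A, ∃ y ∈ B, c x ≠ c y
  · obtain ⟨x0, hx0, y0, hy0, hxy0⟩ := hcase
    set c' : V → Fin 3 := fun u => if u ∈ A then c x0 else if u ∈ B then c y0 else c u with hc'
    have hextA : ∀ w : V, w ∉ A → w ∉ B → c w = c x0 → ∀ x ∈ A, G.Adj w x := by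
      intro w hwA hwB hcw x hx
      have hwx0 : G.Adj w x0 := hfib w x0 (fun h => hwA (h ▸ hx0)) hcw
      exact homA' hp hwA hwB hx0 hwx0 hx
    have hextB : ∀ w : V, w ∉ A → w ∉ B → c w = c y0 → ∀ y ∈ B, G.Adj w y := by
      intro w hwA hwB hcw y hy
      have hwy0 : G.Adj w y0 := hfib w y0 (fun h => hwB (h ▸ hy0)) hcw
      exact homB' hp hwA hwB hy0 hwy0 hy
    have key : ∀ u w : V, u ≠ w → c' u = c' w → (G.deleteEdges {s(a, b)}).Adj u w := by
      intro u w huw hcuw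
      rw [adj_del_iff' G a b u w]
      by_cases huA : u ∈ A <;> by_cases hwA : w ∈ A
      · exact ⟨hcA huA hwA huw, fun h => (Finset.disjoint_left.mp hdisj hwA) (h.2 ▸ hb),
          fun h => (Finset.disjoint_left.mp hdisj huA) (h.1 ▸ hb)⟩
      · by_cases hwB : w ∈ B
        · exfalso
          simp only [hc', if_pos huA, if_neg hwA, if_pos hwB] at hcuw
          exact hxy0 hcuw
        · simp only [hc', if_pos huA, if_neg hwA, if_neg hwB] at hcuw
          refine ⟨(hextA w hwA hwB hcuw.symm u huA).symm,
            fun h => hwB (h.2 ▸ hb), fun h =>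
              (Finset.disjoint_left.mp hdisj huA) (h.1 ▸ hb)⟩
      · by_cases huB : u ∈ B
        · exfalso
          simp only [hc', if_pos hwA, if_neg huA, if_pos huB] at hcuw
          exact hxy0 hcuw.symm
        · simp only [hc', if_pos hwA, if_neg huA, if_neg huB] at hcuw
          refine ⟨hextA u huA huB hcuw w hwA,
            fun h => (Finset.disjoint_left.mp hdisj hwA) (h.2 ▸ hb),
            fun h => huB (h.1 ▸ hb)⟩
      · by_cases huB : u ∈ B <;> by_cases hwB : w ∈ B
        · exact ⟨hcB huB hwB huw, fun h => huA (h.1 ▸ ha),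
            fun h => hwA (h.2 ▸ ha)⟩
        · simp only [hc', if_neg huA, if_pos huB, if_neg hwA, if_neg hwB] at hcuw
          refine ⟨(hextB w hwA hwB hcuw.symm u huB).symm,
            fun h => huA (h.1 ▸ ha), fun h => hwA (h.2 ▸ ha)⟩
        · simp only [hc', if_neg huA, if_neg huB, if_neg hwA, if_pos hwB] at hcuw
          refine ⟨hextB u huA huB hcuw w hwB,
            fun h => huA (h.1 ▸ ha), fun h => hwA (h.2 ▸ ha)⟩
        · simp only [hc', if_neg huA, if_neg huB, if_neg hwA, if_neg hwB] at hcuw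
          exact ⟨hfib u w huw hcuw, fun h => huA (h.1 ▸ ha), fun h => hwA (h.2 ▸ ha)⟩
    refine ⟨Coloring.mk c' ?_⟩
    intro u w hadj hcuw
    rw [compl_adj] at hadj
    exact hadj.2 (key u w hadj.1 hcuw)
  · exfalso
    push_neg at hcase
    have hcomp : ∀ x ∈ A, ∀ y ∈ B, G.Adj x y := by
      intro x hx y hy
      exact hfib x y (fun h => Finset.disjoint_left.mp hdisj hx (h ▸ hy)) (hcase x hx y hy)
    exact hns (drop_of_complete' hp ha hb hcomp)

/-- König's theorem, in the form: there is a "matching" `P` of nonedges between `A` and `B`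
together with a cover `Cov` of the same cardinality. -/
lemma koenig (G : SimpleGraph V) (A B : Finset V) (hdisj : Disjoint A B) :
    ∃ P : Finset (V × V),
      (∀ p ∈ P, p.1 ∈ A ∧ p.2 ∈ B ∧ ¬G.Adj p.1 p.2) ∧
      Set.InjOn (Prod.fst : V × V → V) ↑P ∧ Set.InjOn (Prod.snd : V × V → V) ↑P ∧
      ∃ Cov : Finset V,
        (∀ x ∈ A, ∀ y ∈ B, ¬G.Adj x y → x ∈ Cov ∨ y ∈ Cov) ∧ Cov.card = P.card := by
  classical
  set covs : Set ℕ :=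
    {m | ∃ Cov : Finset V, (∀ x ∈ A, ∀ y ∈ B, ¬G.Adj x y → x ∈ Cov ∨ y ∈ Cov) ∧
      Cov.card = m} with hcovs
  have hne : covs.Nonempty := ⟨(A ∪ B).card, A ∪ B, fun x hx y _ _ => Or.inl (by simp [hx]), rfl⟩
  obtain ⟨Cov1, hCov1, hcard1⟩ := Nat.sInf_mem hne
  have hmin : ∀ Cov : Finset V,
      (∀ x ∈ A, ∀ y ∈ B, ¬G.Adj x y → x ∈ Cov ∨ y ∈ Cov) → sInf covs ≤ Cov.card :=
    fun Cov hCov => Nat.sInf_le ⟨Cov, hCov, rfl⟩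
  -- normalize the cover to be inside A ∪ B
  set Cov0 := Cov1 ∩ (A ∪ B) with hCov0def
  have hCov0 : ∀ x ∈ A, ∀ y ∈ B, ¬G.Adj x y → x ∈ Cov0 ∨ y ∈ Cov0 := by
    intro x hx y hy hn
    rcases hCov1 x hx y hy hn with h | h
    · exact Or.inl (Finset.mem_inter.mpr ⟨h, by simp [hx]⟩)
    · exact Or.inr (Finset.mem_inter.mpr ⟨h, by simp [hy]⟩)
  have hcard0 : Cov0.card = sInf covs := by
    refine le_antisymm ?_ (hmin _ hCov0)
    calc Cov0.card ≤ Cov1.card := Finset.card_le_card (Finset.inter_subset_left)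
      _ = sInf covs := hcard1
  set CA := Cov0 ∩ A with hCAdef
  set CB := Cov0 ∩ B with hCBdef
  have hCA_A : CA ⊆ A := Finset.inter_subset_right
  have hCB_B : CB ⊆ B := Finset.inter_subset_right
  have hCACB : Cov0 = CA ∪ CB := by
    rw [hCAdef, hCBdef, ← Finset.inter_union_distrib_left]
    exact (Finset.inter_eq_left.mpr Finset.inter_subset_right).symm
  have hCAB_disj : Disjoint CA CB :=
    hdisj.mono hCA_A hCB_B
  -- Hall condition on CA
  have hall1 : ∀ s : Finset ↥CA,
      s.card ≤ (s.biUnion (fun x => (B \ CB).filter (fun y => ¬G.Adj ↑x y))).card := by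
    intro s
    by_contra hlt
    push_neg at hlt
    set N := s.biUnion (fun x => (B \ CB).filter (fun y => ¬G.Adj ↑x y)) with hN
    set img := s.image (Subtype.val) with himg
    have himgsub : img ⊆ Cov0 := by
      intro x hx
      simp only [himg, Finset.mem_image] at hx
      obtain ⟨xs, _, rfl⟩ := hx
      exact Finset.mem_of_mem_inter_left xs.2
    have himgcard : img.card = s.card := Finset.card_image_of_injective _ Subtype.val_injective
    have hCov2 : ∀ x ∈ A, ∀ y ∈ B, ¬G.Adj x y → x ∈ (Cov0 \ img) ∪ N ∨ y ∈ (Cov0 \ img) ∪ N := by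
      intro x hx y hy hn
      rcases hCov0 x hx y hy hn with h | h
      · by_cases hxi : x ∈ img
        · -- x is in s; then y is covered: either y ∈ Cov0 (then y ∉ img since y ∈ B) or y ∈ N
          by_cases hyC : y ∈ Cov0
          · refine Or.inr (Finset.mem_union_left _ (Finset.mem_sdiff.mpr ⟨hyC, ?_⟩))
            intro hyi
            simp only [himg, Finset.mem_image] at hyi
            obtain ⟨ys, _, hys⟩ := hyi
            exact Finset.disjoint_left.mp hdisj (hCA_A (hys ▸ ys.2)) hy
          · refine Or.inr (Finset.mem_union_right _ ?_)
            simp only [himg, Finset.mem_image] at hxi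
            obtain ⟨xs, hxs, rfl⟩ := hxi
            refine Finset.mem_biUnion.mpr ⟨xs, hxs, ?_⟩
            refine Finset.mem_filter.mpr ⟨Finset.mem_sdiff.mpr ⟨hy, ?_⟩, hn⟩
            exact fun hyCB => hyC (Finset.mem_of_mem_inter_left hyCB)
        · exact Or.inl (Finset.mem_union_left _ (Finset.mem_sdiff.mpr ⟨h, hxi⟩))
      · refine Or.inr (Finset.mem_union_left _ (Finset.mem_sdiff.mpr ⟨h, ?_⟩))
        intro hyi
        simp only [himg, Finset.mem_image] at hyi
        obtain ⟨ys, _, hys⟩ := hyi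
        exact Finset.disjoint_left.mp hdisj (hCA_A (hys ▸ ys.2)) hy
    have hsub2 : img ⊆ Cov0 := himgsub
    have hc2 : ((Cov0 \ img) ∪ N).card < sInf covs := by
      calc ((Cov0 \ img) ∪ N).card ≤ (Cov0 \ img).card + N.card := Finset.card_union_le _ _
        _ = Cov0.card - img.card + N.card := by rw [Finset.card_sdiff_of_subset hsub2]
        _ < Cov0.card - s.card + s.card := by
            have hsle : s.card ≤ Cov0.card := by
              calc s.card = img.card := himgcard.symm
                _ ≤ Cov0.card := Finset.card_le_card hsub2
            omega
        _ = Cov0.card := by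
            have hsle : s.card ≤ Cov0.card := by
              calc s.card = img.card := himgcard.symm
                _ ≤ Cov0.card := Finset.card_le_card hsub2
            omega
        _ = sInf covs := hcard0
    exact absurd (hmin _ hCov2) (not_le.mpr hc2)
  obtain ⟨f1, hf1inj, hf1mem⟩ :=
    (Finset.all_card_le_biUnion_card_iff_exists_injective
      (fun x : ↥CA => (B \ CB).filter (fun y => ¬G.Adj ↑x y))).mp hall1
  -- Hall condition on CB
  have hall2 : ∀ s : Finset ↥CB,
      s.card ≤ (s.biUnion (fun y => (A \ CA).filter (fun x => ¬G.Adj x ↑y))).card := by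
    intro s
    by_contra hlt
    push_neg at hlt
    set N := s.biUnion (fun y => (A \ CA).filter (fun x => ¬G.Adj x ↑y)) with hN
    set img := s.image (Subtype.val) with himg
    have himgsub : img ⊆ Cov0 := by
      intro x hx
      simp only [himg, Finset.mem_image] at hx
      obtain ⟨xs, _, rfl⟩ := hx
      exact Finset.mem_of_mem_inter_left xs.2
    have himgcard : img.card = s.card := Finset.card_image_of_injective _ Subtype.val_injective
    have hCov2 : ∀ x ∈ A, ∀ y ∈ B, ¬G.Adj x y → x ∈ (Cov0 \ img) ∪ N ∨ y ∈ (Cov0 \ img) ∪ N := by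
      intro x hx y hy hn
      rcases hCov0 x hx y hy hn with h | h
      · refine Or.inl (Finset.mem_union_left _ (Finset.mem_sdiff.mpr ⟨h, ?_⟩))
        intro hxi
        simp only [himg, Finset.mem_image] at hxi
        obtain ⟨xs, _, hxs⟩ := hxi
        exact Finset.disjoint_left.mp hdisj hx (hCB_B (hxs ▸ xs.2))
      · by_cases hyi : y ∈ img
        · by_cases hxC : x ∈ Cov0
          · refine Or.inl (Finset.mem_union_left _ (Finset.mem_sdiff.mpr ⟨hxC, ?_⟩))
            intro hxi
            simp only [himg, Finset.mem_image] at hxi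
            obtain ⟨xs, _, hxs⟩ := hxi
            exact Finset.disjoint_left.mp hdisj hx (hCB_B (hxs ▸ xs.2))
          · refine Or.inl (Finset.mem_union_right _ ?_)
            simp only [himg, Finset.mem_image] at hyi
            obtain ⟨ys, hys, rfl⟩ := hyi
            refine Finset.mem_biUnion.mpr ⟨ys, hys, ?_⟩
            refine Finset.mem_filter.mpr ⟨Finset.mem_sdiff.mpr ⟨hx, ?_⟩, hn⟩
            exact fun hxCA => hxC (Finset.mem_of_mem_inter_left hxCA)
        · exact Or.inr (Finset.mem_union_left _ (Finset.mem_sdiff.mpr ⟨h, hyi⟩))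
    have hc2 : ((Cov0 \ img) ∪ N).card < sInf covs := by
      have hsle : s.card ≤ Cov0.card := by
        calc s.card = img.card := himgcard.symm
          _ ≤ Cov0.card := Finset.card_le_card himgsub
      calc ((Cov0 \ img) ∪ N).card ≤ (Cov0 \ img).card + N.card := Finset.card_union_le _ _
        _ = Cov0.card - img.card + N.card := by rw [Finset.card_sdiff_of_subset himgsub]
        _ < Cov0.card - s.card + s.card := by omega
        _ = Cov0.card := by omega
        _ = sInf covs := hcard0
    exact absurd (hmin _ hCov2) (not_le.mpr hc2)
  obtain ⟨f2, hf2inj, hf2mem⟩ :=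
    (Finset.all_card_le_biUnion_card_iff_exists_injective
      (fun y : ↥CB => (A \ CA).filter (fun x => ¬G.Adj x ↑y))).mp hall2
  -- assemble the matching
  set P1 : Finset (V × V) := CA.attach.image (fun x : {x // x ∈ CA} => (Subtype.val x, f1 x)) with hP1
  set P2 : Finset (V × V) := CB.attach.image (fun y : {y // y ∈ CB} => (f2 y, Subtype.val y)) with hP2
  have hP1mem : ∀ p ∈ P1, p.1 ∈ CA ∧ p.2 ∈ B \ CB ∧ ¬G.Adj p.1 p.2 := by
    intro p hp
    rw [hP1, Finset.mem_image] at hp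
    obtain ⟨x, -, rfl⟩ := hp
    have := hf1mem x
    simp only [Finset.mem_filter, Finset.mem_sdiff] at this
    exact ⟨x.2, Finset.mem_sdiff.mpr ⟨this.1.1, this.1.2⟩, this.2⟩
  have hP2mem : ∀ p ∈ P2, p.1 ∈ A \ CA ∧ p.2 ∈ CB ∧ ¬G.Adj p.1 p.2 := by
    intro p hp
    rw [hP2, Finset.mem_image] at hp
    obtain ⟨y, -, rfl⟩ := hp
    have := hf2mem y
    simp only [Finset.mem_filter, Finset.mem_sdiff] at this
    exact ⟨Finset.mem_sdiff.mpr ⟨this.1.1, this.1.2⟩, y.2, this.2⟩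
  refine ⟨P1 ∪ P2, ?_, ?_, ?_, Cov0, hCov0, ?_⟩
  · intro p hp
    rcases Finset.mem_union.mp hp with hp | hp
    · obtain ⟨h1, h2, h3⟩ := hP1mem p hp
      exact ⟨hCA_A h1, (Finset.mem_sdiff.mp h2).1, h3⟩
    · obtain ⟨h1, h2, h3⟩ := hP2mem p hp
      exact ⟨(Finset.mem_sdiff.mp h1).1, hCB_B h2, h3⟩
  · intro p hp q hq hpq
    simp only [Finset.coe_union, Set.mem_union, Finset.mem_coe] at hp hq
    rcases hp with hp | hp <;> rcases hq with hq | hq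
    · -- both in P1: first components determine the subtype element
      rw [hP1, Finset.mem_image] at hp hq
      obtain ⟨x, -, rfl⟩ := hp
      obtain ⟨x', -, rfl⟩ := hq
      have hx : (x : V) = (x' : V) := hpq
      have : x = x' := Subtype.ext hx
      rw [this]
    · exfalso
      have h1 := (hP1mem p hp).1
      have h2 := (hP2mem q hq).1
      rw [hpq] at h1
      exact (Finset.mem_sdiff.mp h2).2 h1
    · exfalso
      have h1 := (hP2mem p hp).1
      have h2 := (hP1mem q hq).1
      rw [hpq] at h1
      exact (Finset.mem_sdiff.mp h1).2 h2
    · rw [hP2, Finset.mem_image] at hp hq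
      obtain ⟨y, -, rfl⟩ := hp
      obtain ⟨y', -, rfl⟩ := hq
      have : y = y' := hf2inj hpq
      rw [this]
  · intro p hp q hq hpq
    simp only [Finset.coe_union, Set.mem_union, Finset.mem_coe] at hp hq
    rcases hp with hp | hp <;> rcases hq with hq | hq
    · rw [hP1, Finset.mem_image] at hp hq
      obtain ⟨x, -, rfl⟩ := hp
      obtain ⟨x', -, rfl⟩ := hq
      have : x = x' := hf1inj hpq
      rw [this]
    · exfalso
      have h1 := (hP1mem p hp).2.1
      have h2 := (hP2mem q hq).2.1
      rw [hpq] at h1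
      exact (Finset.mem_sdiff.mp h1).2 h2
    · exfalso
      have h1 := (hP2mem p hp).2.1
      have h2 := (hP1mem q hq).2.1
      rw [hpq] at h1
      exact (Finset.mem_sdiff.mp h2).2 h1
    · rw [hP2, Finset.mem_image] at hp hq
      obtain ⟨y, -, rfl⟩ := hp
      obtain ⟨y', -, rfl⟩ := hq
      have hy : (y : V) = (y' : V) := hpq
      have : y = y' := Subtype.ext hy
      rw [this]
  · -- cardinality
    have hd : Disjoint P1 P2 := by
      rw [Finset.disjoint_left]
      intro p hp1 hp2
      exact (Finset.mem_sdiff.mp (hP2mem p hp2).1).2 (hP1mem p hp1).1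
    have hinj1 : Function.Injective (fun x : {x // x ∈ CA} => (Subtype.val x, f1 x)) :=
      fun x x' h => Subtype.ext (congrArg Prod.fst h)
    have hinj2 : Function.Injective (fun y : {y // y ∈ CB} => (f2 y, Subtype.val y)) :=
      fun y y' h => Subtype.ext (congrArg Prod.snd h)
    have hc1 : P1.card = CA.card := by
      rw [hP1, Finset.card_image_of_injective _ hinj1, Finset.card_attach]
    have hc2 : P2.card = CB.card := by
      rw [hP2, Finset.card_image_of_injective _ hinj2, Finset.card_attach]
    rw [Finset.card_union_of_disjoint hd, hc1, hc2, hCACB,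
      Finset.card_union_of_disjoint hCAB_disj]

lemma colorable_del (hp : IsHomPair G A B) (ha : a ∈ A) (hb : b ∈ B) (hab : G.Adj a b)
    (hns : ¬ cliqueNumOn (G.deleteEdges {s(a, b)}) (↑A ∪ ↑B) < cliqueNumOn G (↑A ∪ ↑B))
    (n : ℕ) (hcol : (G.deleteEdges {s(a, b)}).Colorable n) : G.Colorable n := by
  classical
  obtain ⟨C⟩ := hcol
  set c : V → Fin n := fun u => C u with hcdef
  have valid : ∀ {u w : V}, (G.deleteEdges {s(a, b)}).Adj u w → c u ≠ c w :=
    fun h => C.valid h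
  have hdisj := hp.2.2.2.2.2.2.1
  have hcA := hp.2.2.1
  have hcB := hp.2.2.2.1
  have hAB : ∀ {x y : V}, x ∈ A → y ∈ B → x ≠ y :=
    fun hx hy he => Finset.disjoint_left.mp hdisj hx (he ▸ hy)
  by_cases hcab : c a = c b
  swap
  · refine ⟨Coloring.mk c ?_⟩
    intro u w hadj
    by_cases hp1 : u = a ∧ w = b
    · rw [hp1.1, hp1.2]; exact hcab
    by_cases hp2 : u = b ∧ w = a
    · rw [hp2.1, hp2.2]; exact fun h => hcab h.symm
    · exact valid ((adj_del_iff' G a b u w).mpr ⟨hadj, hp1, hp2⟩)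
  -- main case
  have hinjA : Set.InjOn c ↑A := by
    intro x hx y hy hcc
    by_contra hne
    exact valid ((adj_del_iff' G a b x y).mpr ⟨hcA hx hy hne,
      fun h => hAB hy hb h.2, fun h => hAB hx hb h.1⟩) hcc

  have hinjB : Set.InjOn c ↑B := by
    intro x hx y hy hcc
    by_contra hne
    exact valid ((adj_del_iff' G a b x y).mpr ⟨hcB hx hy hne,
      fun h => hAB ha hx h.1.symm, fun h => hAB ha hy h.2.symm⟩) hcc
  set CA := A.image c with hCAdef
  set CB := B.image c with hCBdef
  set D := CA ∩ CB with hDdef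
  have hCAcard : CA.card = A.card := Finset.card_image_of_injOn hinjA
  have hCBcard : CB.card = B.card := Finset.card_image_of_injOn hinjB
  have hDCA : D ⊆ CA := Finset.inter_subset_left
  have hDCB : D ⊆ CB := Finset.inter_subset_right
  have hextA : ∀ w x, w ∉ A → w ∉ B → x ∈ A → G.Adj w x → c w ∉ CA := by
    intro w x hwA hwB hx hadj hmem
    obtain ⟨x', hx', hcx'⟩ := Finset.mem_image.mp hmem
    have hadj' : G.Adj w x' := homA' hp hwA hwB hx hadj hx'
    exact valid ((adj_del_iff' G a b w x').mpr ⟨hadj',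
      fun h => hAB hx' hb h.2, fun h => hwB (h.1 ▸ hb)⟩) hcx'.symm
  have hextB : ∀ w y, w ∉ A → w ∉ B → y ∈ B → G.Adj w y → c w ∉ CB := by
    intro w y hwA hwB hy hadj hmem
    obtain ⟨y', hy', hcy'⟩ := Finset.mem_image.mp hmem
    have hadj' : G.Adj w y' := homB' hp hwA hwB hy hadj hy'
    exact valid ((adj_del_iff' G a b w y').mpr ⟨hadj',
      fun h => hwA (h.1 ▸ ha), fun h => hAB ha hy' h.2.symm⟩) hcy'.symm
  -- weak LP duality chain: |D| ≤ |A∪B| - ω'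
  obtain ⟨K, hKsub, hK⟩ := cliqueNumOn_exists (G.deleteEdges {s(a, b)}) (↑A ∪ ↑B)
  have hKfin : K ⊆ A ∪ B := by
    intro x hx
    have := hKsub (Finset.mem_coe.mpr hx)
    simpa using this
  have hzex : ∀ γ ∈ D, ∃ z, z ∈ (A ∪ B) \ K ∧ c z = γ := by
    intro γ hγ
    obtain ⟨x, hx, hcx⟩ := Finset.mem_image.mp (hDCA hγ)
    obtain ⟨y, hy, hcy⟩ := Finset.mem_image.mp (hDCB hγ)
    have hnadj : ¬(G.deleteEdges {s(a, b)}).Adj x y :=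
      fun h => valid h (hcx.trans hcy.symm)
    by_cases hxK : x ∈ K
    · by_cases hyK : y ∈ K
      · exact absurd (hK.1 (Finset.mem_coe.mpr hxK) (Finset.mem_coe.mpr hyK) (hAB hx hy)) hnadj
      · exact ⟨y, Finset.mem_sdiff.mpr ⟨by simp [hy], hyK⟩, hcy⟩
    · exact ⟨x, Finset.mem_sdiff.mpr ⟨by simp [hx], hxK⟩, hcx⟩
  set zf : Fin n → V := fun γ => if h : γ ∈ D then (hzex γ h).choose else a with hzfdef
  have hzf1 : ∀ γ ∈ D, zf γ ∈ (A ∪ B) \ K ∧ c (zf γ) = γ := by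
    intro γ h
    rw [hzfdef]
    dsimp only
    rw [dif_pos h]
    exact (hzex γ h).choose_spec
  have hDle1 : D.card ≤ ((A ∪ B) \ K).card :=
    Finset.card_le_card_of_injOn zf (fun γ h => (hzf1 γ h).1)
      (fun γ hγ γ' hγ' he => by
        rw [← (hzf1 γ (Finset.mem_coe.mp hγ)).2, ← (hzf1 γ' (Finset.mem_coe.mp hγ')).2, he])
  have hKcards : ((A ∪ B) \ K).card = (A ∪ B).card - K.card := Finset.card_sdiff_of_subset hKfin
  -- every cover is at least |A∪B| - ω
  have hcovlb : ∀ Cov : Finset V, (∀ x ∈ A, ∀ y ∈ B, ¬G.Adj x y → x ∈ Cov ∨ y ∈ Cov) →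
      (A ∪ B).card - cliqueNumOn G (↑A ∪ ↑B) ≤ Cov.card := by
    intro Cov hCov
    have hKc : G.IsClique (↑((A ∪ B) \ Cov) : Set V) := by
      intro x hx y hy hne
      simp only [Finset.coe_sdiff, Set.mem_diff, Finset.mem_coe, Finset.mem_union] at hx hy
      rcases hx.1 with hxA | hxB <;> rcases hy.1 with hyA | hyB
      · exact hcA hxA hyA hne
      · by_contra hn
        rcases hCov x hxA y hyB hn with h | h
        · exact hx.2 h
        · exact hy.2 h
      · by_contra hn
        rcases hCov y hyA x hxB (fun h => hn h.symm) with h | h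
        · exact hy.2 h
        · exact hx.2 h
      · exact hcB hxB hyB hne
    have h1 : ((A ∪ B) \ Cov).card ≤ cliqueNumOn G (↑A ∪ ↑B) := by
      refine le_cliqueNumOn ?_ ⟨hKc, rfl⟩
      intro x hx
      simp only [Finset.coe_sdiff, Set.mem_diff, Finset.mem_coe, Finset.mem_union] at hx
      simpa using hx.1
    have h2 : (A ∪ B).card ≤ Cov.card + ((A ∪ B) \ Cov).card := by
      have hsub : A ∪ B ⊆ Cov ∪ ((A ∪ B) \ Cov) := by
        intro x hx
        by_cases hc : x ∈ Cov
        · exact Finset.mem_union_left _ hc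
        · exact Finset.mem_union_right _ (Finset.mem_sdiff.mpr ⟨hx, hc⟩)
      calc (A ∪ B).card ≤ (Cov ∪ ((A ∪ B) \ Cov)).card := Finset.card_le_card hsub
        _ ≤ Cov.card + ((A ∪ B) \ Cov).card := Finset.card_union_le _ _
    omega
  obtain ⟨P, hPmem, hPfst, hPsnd, Cov, hCov, hCovcard⟩ := koenig G A B hdisj
  have hchain : D.card ≤ P.card := by
    have h2 := hcovlb Cov hCov
    have h3 : cliqueNumOn G (↑A ∪ ↑B) ≤
        cliqueNumOn (G.deleteEdges {s(a, b)}) (↑A ∪ ↑B) := not_lt.mp hns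
    have h4 := hK.2
    omega
  obtain ⟨P', hP'sub, hP'card⟩ := Finset.exists_subset_card_eq hchain
  have e : ↥D ≃ ↥P' := Finset.equivOfCardEq hP'card.symm
  set X := P'.image Prod.fst with hXdef
  set Y := P'.image Prod.snd with hYdef
  have hfst' : Set.InjOn (Prod.fst : V × V → V) ↑P' := hPfst.mono (Finset.coe_subset.mpr hP'sub)
  have hsnd' : Set.InjOn (Prod.snd : V × V → V) ↑P' := hPsnd.mono (Finset.coe_subset.mpr hP'sub)
  have hXcard : X.card = D.card := by rw [hXdef, Finset.card_image_of_injOn hfst', hP'card]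
  have hYcard : Y.card = D.card := by rw [hYdef, Finset.card_image_of_injOn hsnd', hP'card]
  have hXA : X ⊆ A := by
    intro x hx
    obtain ⟨p, hpP, rfl⟩ := Finset.mem_image.mp hx
    exact (hPmem p (hP'sub hpP)).1
  have hYB : Y ⊆ B := by
    intro y hy
    obtain ⟨p, hpP, rfl⟩ := Finset.mem_image.mp hy
    exact (hPmem p (hP'sub hpP)).2.1
  have eA : ↥(A \ X) ≃ ↥(CA \ D) := Finset.equivOfCardEq
    (by rw [Finset.card_sdiff_of_subset hXA, Finset.card_sdiff_of_subset hDCA, hXcard, hCAcard])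
  have eB : ↥(B \ Y) ≃ ↥(CB \ D) := Finset.equivOfCardEq
    (by rw [Finset.card_sdiff_of_subset hYB, Finset.card_sdiff_of_subset hDCB, hYcard, hCBcard])
  set cc : V → Fin n := fun u =>
    if hA : u ∈ A then
      (if hX : u ∈ X then
        ↑(e.symm ⟨(Finset.mem_image.mp hX).choose, ((Finset.mem_image.mp hX).choose_spec).1⟩)
       else ↑(eA ⟨u, Finset.mem_sdiff.mpr ⟨hA, hX⟩⟩))
    else if hB : u ∈ B then
      (if hY : u ∈ Y then
        ↑(e.symm ⟨(Finset.mem_image.mp hY).choose, ((Finset.mem_image.mp hY).choose_spec).1⟩)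
       else ↑(eB ⟨u, Finset.mem_sdiff.mpr ⟨hB, hY⟩⟩))
    else c u
    with hccdef
  have ccA1 : ∀ p (hpP : p ∈ P'), cc p.1 = ↑(e.symm ⟨p, hpP⟩) := by
    intro p hpP
    have hpA : p.1 ∈ A := (hPmem p (hP'sub hpP)).1
    have hpX : p.1 ∈ X := Finset.mem_image.mpr ⟨p, hpP, rfl⟩
    rw [hccdef]
    dsimp only
    rw [dif_pos hpA, dif_pos hpX]
    have hq := (Finset.mem_image.mp hpX).choose_spec
    have hqp : (Finset.mem_image.mp hpX).choose = p :=
      hfst' (Finset.mem_coe.mpr hq.1) (Finset.mem_coe.mpr hpP) hq.2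
    exact congrArg Subtype.val (congrArg e.symm (Subtype.ext hqp))
  have ccB1 : ∀ p (hpP : p ∈ P'), cc p.2 = ↑(e.symm ⟨p, hpP⟩) := by
    intro p hpP
    have hpB : p.2 ∈ B := (hPmem p (hP'sub hpP)).2.1
    have hpA : p.2 ∉ A := fun h => hAB h hpB rfl
    have hpY : p.2 ∈ Y := Finset.mem_image.mpr ⟨p, hpP, rfl⟩
    rw [hccdef]
    dsimp only
    rw [dif_neg hpA, dif_pos hpB, dif_pos hpY]
    have hq := (Finset.mem_image.mp hpY).choose_spec
    have hqp : (Finset.mem_image.mp hpY).choose = p :=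
      hsnd' (Finset.mem_coe.mpr hq.1) (Finset.mem_coe.mpr hpP) hq.2
    exact congrArg Subtype.val (congrArg e.symm (Subtype.ext hqp))
  have ccA2 : ∀ u (hA : u ∈ A) (hX : u ∉ X),
      cc u = ↑(eA ⟨u, Finset.mem_sdiff.mpr ⟨hA, hX⟩⟩) := by
    intro u hA hX
    rw [hccdef]
    dsimp only
    rw [dif_pos hA, dif_neg hX]
  have ccB2 : ∀ u (huA : u ∉ A) (hB : u ∈ B) (hY : u ∉ Y),
      cc u = ↑(eB ⟨u, Finset.mem_sdiff.mpr ⟨hB, hY⟩⟩) := by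
    intro u huA hB hY
    rw [hccdef]
    dsimp only
    rw [dif_neg huA, dif_pos hB, dif_neg hY]
  have ccExt : ∀ u, u ∉ A → u ∉ B → cc u = c u := by
    intro u huA huB
    rw [hccdef]
    dsimp only
    rw [dif_neg huA, dif_neg huB]
  have hmemA : ∀ u, u ∈ A → cc u ∈ CA := by
    intro u hA
    by_cases hX : u ∈ X
    · obtain ⟨p, hpP, hpu⟩ := Finset.mem_image.mp hX
      rw [← hpu, ccA1 p hpP]
      exact hDCA (e.symm ⟨p, hpP⟩).2
    · rw [ccA2 u hA hX]
      exact (Finset.mem_sdiff.mp (eA ⟨u, Finset.mem_sdiff.mpr ⟨hA, hX⟩⟩).2).1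
  have hmemB : ∀ u, u ∉ A → u ∈ B → cc u ∈ CB := by
    intro u huA hB
    by_cases hY : u ∈ Y
    · obtain ⟨p, hpP, hpu⟩ := Finset.mem_image.mp hY
      rw [← hpu, ccB1 p hpP]
      exact hDCB (e.symm ⟨p, hpP⟩).2
    · rw [ccB2 u huA hB hY]
      exact (Finset.mem_sdiff.mp (eB ⟨u, Finset.mem_sdiff.mpr ⟨hB, hY⟩⟩).2).1
  have claimAA : ∀ u w, u ∈ A → w ∈ A → u ≠ w → cc u ≠ cc w := by
    intro u w hu hw hne hcc
    by_cases hXu : u ∈ X <;> by_cases hXw : w ∈ X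
    · obtain ⟨p, hpP, hpu⟩ := Finset.mem_image.mp hXu
      obtain ⟨q, hqP, hqw⟩ := Finset.mem_image.mp hXw
      rw [← hpu, ← hqw, ccA1 p hpP, ccA1 q hqP] at hcc
      have : p = q := congrArg Subtype.val (e.symm.injective (Subtype.coe_injective hcc))
      exact hne (hpu ▸ hqw ▸ congrArg Prod.fst this)
    · obtain ⟨p, hpP, hpu⟩ := Finset.mem_image.mp hXu
      have h1 : cc u ∈ D := by rw [← hpu, ccA1 p hpP]; exact (e.symm ⟨p, hpP⟩).2
      have h2 : cc w ∉ D := by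
        rw [ccA2 w hw hXw]
        exact (Finset.mem_sdiff.mp (eA ⟨w, Finset.mem_sdiff.mpr ⟨hw, hXw⟩⟩).2).2
      exact h2 (hcc ▸ h1)
    · obtain ⟨q, hqP, hqw⟩ := Finset.mem_image.mp hXw
      have h1 : cc w ∈ D := by rw [← hqw, ccA1 q hqP]; exact (e.symm ⟨q, hqP⟩).2
      have h2 : cc u ∉ D := by
        rw [ccA2 u hu hXu]
        exact (Finset.mem_sdiff.mp (eA ⟨u, Finset.mem_sdiff.mpr ⟨hu, hXu⟩⟩).2).2
      exact h2 (hcc ▸ h1)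
    · rw [ccA2 u hu hXu, ccA2 w hw hXw] at hcc
      have := eA.injective (Subtype.coe_injective hcc)
      exact hne (congrArg Subtype.val this)
  have claimBB : ∀ u w, u ∉ A → w ∉ A → u ∈ B → w ∈ B → u ≠ w → cc u ≠ cc w := by
    intro u w huA hwA hu hw hne hcc
    by_cases hYu : u ∈ Y <;> by_cases hYw : w ∈ Y
    · obtain ⟨p, hpP, hpu⟩ := Finset.mem_image.mp hYu
      obtain ⟨q, hqP, hqw⟩ := Finset.mem_image.mp hYw
      rw [← hpu, ← hqw, ccB1 p hpP, ccB1 q hqP] at hcc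
      have : p = q := congrArg Subtype.val (e.symm.injective (Subtype.coe_injective hcc))
      exact hne (hpu ▸ hqw ▸ congrArg Prod.snd this)
    · obtain ⟨p, hpP, hpu⟩ := Finset.mem_image.mp hYu
      have h1 : cc u ∈ D := by rw [← hpu, ccB1 p hpP]; exact (e.symm ⟨p, hpP⟩).2
      have h2 : cc w ∉ D := by
        rw [ccB2 w hwA hw hYw]
        exact (Finset.mem_sdiff.mp (eB ⟨w, Finset.mem_sdiff.mpr ⟨hw, hYw⟩⟩).2).2
      exact h2 (hcc ▸ h1)
    · obtain ⟨q, hqP, hqw⟩ := Finset.mem_image.mp hYw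
      have h1 : cc w ∈ D := by rw [← hqw, ccB1 q hqP]; exact (e.symm ⟨q, hqP⟩).2
      have h2 : cc u ∉ D := by
        rw [ccB2 u huA hu hYu]
        exact (Finset.mem_sdiff.mp (eB ⟨u, Finset.mem_sdiff.mpr ⟨hu, hYu⟩⟩).2).2
      exact h2 (hcc ▸ h1)
    · rw [ccB2 u huA hu hYu, ccB2 w hwA hw hYw] at hcc
      have := eB.injective (Subtype.coe_injective hcc)
      exact hne (congrArg Subtype.val this)
  have claimAB : ∀ u w, u ∈ A → w ∈ B → cc u = cc w → ¬G.Adj u w := by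
    intro u w hu hw hcc
    have hwA : w ∉ A := fun h => hAB h hw rfl
    by_cases hXu : u ∈ X <;> by_cases hYw : w ∈ Y
    · obtain ⟨p, hpP, hpu⟩ := Finset.mem_image.mp hXu
      obtain ⟨q, hqP, hqw⟩ := Finset.mem_image.mp hYw
      rw [← hpu, ← hqw, ccA1 p hpP, ccB1 q hqP] at hcc
      have hpq : p = q := congrArg Subtype.val (e.symm.injective (Subtype.coe_injective hcc))
      have hnadj := (hPmem p (hP'sub hpP)).2.2
      rw [← hpu, ← hqw, ← hpq]
      exact fun h => hnadj (by rw [hpq] at h ⊢; exact (congrArg (fun z => G.Adj z q.2) rfl) ▸ h)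
    · intro _
      obtain ⟨p, hpP, hpu⟩ := Finset.mem_image.mp hXu
      have h1 : cc u ∈ D := by rw [← hpu, ccA1 p hpP]; exact (e.symm ⟨p, hpP⟩).2
      have h2 : cc w ∉ D := by
        rw [ccB2 w hwA hw hYw]
        exact (Finset.mem_sdiff.mp (eB ⟨w, Finset.mem_sdiff.mpr ⟨hw, hYw⟩⟩).2).2
      exact h2 (hcc ▸ h1)
    · intro _
      obtain ⟨q, hqP, hqw⟩ := Finset.mem_image.mp hYw
      have h1 : cc w ∈ D := by rw [← hqw, ccB1 q hqP]; exact (e.symm ⟨q, hqP⟩).2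
      have h2 : cc u ∉ D := by
        rw [ccA2 u hu hXu]
        exact (Finset.mem_sdiff.mp (eA ⟨u, Finset.mem_sdiff.mpr ⟨hu, hXu⟩⟩).2).2
      exact h2 (hcc ▸ h1)
    · intro _
      have h1 : cc u ∈ CA \ D := by
        rw [ccA2 u hu hXu]; exact (eA ⟨u, Finset.mem_sdiff.mpr ⟨hu, hXu⟩⟩).2
      have h2 : cc w ∈ CB \ D := by
        rw [ccB2 w hwA hw hYw]; exact (eB ⟨w, Finset.mem_sdiff.mpr ⟨hw, hYw⟩⟩).2
      have hD : cc u ∈ D := Finset.mem_inter.mpr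
        ⟨(Finset.mem_sdiff.mp h1).1, hcc ▸ (Finset.mem_sdiff.mp h2).1⟩
      exact (Finset.mem_sdiff.mp h1).2 hD
  have claimAext : ∀ u w, u ∈ A → w ∉ A → w ∉ B → G.Adj u w → cc u ≠ cc w := by
    intro u w hu hwA hwB hadj hcc
    have h1 : cc u ∈ CA := hmemA u hu
    have h2 : c w ∉ CA := hextA w u hwA hwB hu hadj.symm
    rw [ccExt w hwA hwB] at hcc
    exact h2 (hcc ▸ h1)
  have claimBext : ∀ u w, u ∉ A → u ∈ B → w ∉ A → w ∉ B → G.Adj u w → cc u ≠ cc w := by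
    intro u w huA hu hwA hwB hadj hcc
    have h1 : cc u ∈ CB := hmemB u huA hu
    have h2 : c w ∉ CB := hextB w u hwA hwB hu hadj.symm
    rw [ccExt w hwA hwB] at hcc
    exact h2 (hcc ▸ h1)
  have claimExt : ∀ u w, u ∉ A → u ∉ B → w ∉ A → w ∉ B → G.Adj u w → cc u ≠ cc w := by
    intro u w huA huB hwA hwB hadj hcc
    rw [ccExt u huA huB, ccExt w hwA hwB] at hcc
    exact valid ((adj_del_iff' G a b u w).mpr ⟨hadj,
      fun h => huA (h.1 ▸ ha), fun h => hwA (h.2 ▸ ha)⟩) hcc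
  refine ⟨Coloring.mk cc ?_⟩
  intro u w hadj
  by_cases huA : u ∈ A
  · by_cases hwA : w ∈ A
    · exact claimAA u w huA hwA hadj.ne
    · by_cases hwB : w ∈ B
      · exact fun hcc => claimAB u w huA hwB hcc hadj
      · exact claimAext u w huA hwA hwB hadj
  · by_cases huB : u ∈ B
    · by_cases hwA : w ∈ A
      · exact fun hcc => claimAB w u hwA huB hcc.symm hadj.symm
      · by_cases hwB : w ∈ B
        · exact claimBB u w huA hwA huB hwB hadj.ne
        · exact claimBext u w huA huB hwA hwB hadj
    · by_cases hwA : w ∈ A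
      · exact fun hcc => claimAext w u hwA huA huB hadj.symm hcc.symm
      · by_cases hwB : w ∈ B
        · exact fun hcc => claimBext w u hwA hwB huA huB hadj.symm hcc.symm
        · exact claimExt u w huA huB hwA hwB hadj


lemma quasiline_del (hp : IsHomPair G A B) (ha : a ∈ A) (hb : b ∈ B) (hab : G.Adj a b)
    (hns : ¬ cliqueNumOn (G.deleteEdges {s(a, b)}) (↑A ∪ ↑B) < cliqueNumOn G (↑A ∪ ↑B))
    (hql : QuasiLine G) : QuasiLine (G.deleteEdges {s(a, b)}) := by
  have hcf' := clawfree_del hp ha hb hab hns (clawfree_of_quasiline hql)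
  intro v
  obtain ⟨S, T, hS, hT, hcov⟩ := hql v
  set S₀ := S ∩ G.neighborSet v with hS₀def
  set T₀ := T ∩ G.neighborSet v with hT₀def
  have hS₀ : G.IsClique S₀ := hS.subset Set.inter_subset_left
  have hT₀ : G.IsClique T₀ := hT.subset Set.inter_subset_left
  have hS₀sub : S₀ ⊆ G.neighborSet v := Set.inter_subset_right
  have hT₀sub : T₀ ⊆ G.neighborSet v := Set.inter_subset_right
  have hcov₀ : G.neighborSet v ⊆ S₀ ∪ T₀ := fun u hu =>
    (hcov hu).imp (fun h => ⟨h, hu⟩) (fun h => ⟨h, hu⟩)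
  have hNsub : (G.deleteEdges {s(a, b)}).neighborSet v ⊆ G.neighborSet v := by
    intro u hu
    exact ((adj_del_iff' G a b v u).mp hu).1
  by_cases pS : a ∈ S₀ ∧ b ∈ S₀
  · exact ql_core hp ha hb hab hns hcf' v S₀ T₀ hS₀ hT₀ hS₀sub hT₀sub hcov₀ pS.1 pS.2
  · by_cases pT : a ∈ T₀ ∧ b ∈ T₀
    · exact ql_core hp ha hb hab hns hcf' v T₀ S₀ hT₀ hS₀ hT₀sub hS₀sub
        (fun u hu => (hcov₀ hu).symm) pT.1 pT.2
    · exact ⟨S₀, T₀, clique_del_of_not_pair hS₀ pS, clique_del_of_not_pair hT₀ pT,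
        fun u hu => hcov₀ (hNsub hu)⟩

lemma main_aux : ∀ (m : ℕ) (G : SimpleGraph V), G.edgeSet.ncard ≤ m →
    ∃ G' : SimpleGraph V, G' ≤ G ∧ Skeletal G' ∧
      G'.chromaticNumber = G.chromaticNumber ∧
      (ClawFree G → ClawFree G') ∧
      (QuasiLine G → QuasiLine G') ∧
      (Gᶜ.Colorable 3 → G'ᶜ.Colorable 3) := by
  intro m
  induction m with
  | zero =>
    intro G hm
    by_cases hsk : Skeletal G
    · exact ⟨G, le_rfl, hsk, rfl, id, id, id⟩
    · exfalso
      have : ∃ A B : Finset V, IsHomPair G A B ∧ ¬ IsSkeletalPair G A B := by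
        by_contra hc
        push_neg at hc
        exact hsk (fun A B hp => hc A B hp)
      obtain ⟨A, B, hpair, hnsk⟩ := this
      rw [IsSkeletalPair] at hnsk
      push_neg at hnsk
      obtain ⟨x, hx, y, hy, hadj, -⟩ := hnsk
      have hmem : s(x, y) ∈ G.edgeSet := hadj
      have : 0 < G.edgeSet.ncard := by
        rw [Set.ncard_pos (G.edgeSet.toFinite)]
        exact ⟨_, hmem⟩
      omega
  | succ m ih =>
    intro G hm
    by_cases hsk : Skeletal G
    · exact ⟨G, le_rfl, hsk, rfl, id, id, id⟩
    · have : ∃ A B : Finset V, IsHomPair G A B ∧ ¬ IsSkeletalPair G A B := by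
        by_contra hc
        push_neg at hc
        exact hsk (fun A B hp => hc A B hp)
      obtain ⟨A, B, hpair, hnsk⟩ := this
      rw [IsSkeletalPair] at hnsk
      push_neg at hnsk
      obtain ⟨x, hx, y, hy, hadj, hge⟩ := hnsk
      have hns : ¬ cliqueNumOn (G.deleteEdges {s(x, y)}) (↑A ∪ ↑B) <
          cliqueNumOn G (↑A ∪ ↑B) := not_lt.mpr hge
      set G1 := G.deleteEdges {s(x, y)} with hG1def
      have hmem : s(x, y) ∈ G.edgeSet := hadj
      have hcard : G1.edgeSet.ncard ≤ m := by
        have hlt : G1.edgeSet.ncard < G.edgeSet.ncard := by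
          rw [hG1def, SimpleGraph.edgeSet_deleteEdges]
          have : G.edgeSet \ {s(x, y)} = G.edgeSet \ {s(x, y)} := rfl
          calc (G.edgeSet \ {s(x, y)}).ncard = (G.edgeSet \ {s(x, y)}).ncard := rfl
            _ < G.edgeSet.ncard := by
                have h1 : (G.edgeSet \ {s(x, y)}).ncard ≤ G.edgeSet.ncard - 1 := by
                  rw [← Set.ncard_diff_singleton_of_mem hmem]
                have h2 : 0 < G.edgeSet.ncard := by
                  rw [Set.ncard_pos (G.edgeSet.toFinite)]
                  exact ⟨_, hmem⟩
                omega
        omega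
      obtain ⟨G', hle, hsk', hchrom, hcf, hql, h3⟩ := ih G1 hcard
      have hle1 : G1 ≤ G := SimpleGraph.deleteEdges_le _
      refine ⟨G', le_trans hle hle1, hsk', ?_, ?_, ?_, ?_⟩
      · rw [hchrom]
        refine le_antisymm (G1.chromaticNumber_mono G hle1) ?_
        exact chromaticNumber_le_of_forall_imp
          (fun n hc => colorable_del hpair hx hy hadj hns n hc)
      · exact fun h => hcf (clawfree_del hpair hx hy hadj hns h)
      · exact fun h => hql (quasiline_del hpair hx hy hadj hns h)
      · exact fun h => h3 (compl_colorable_del hpair hx hy hadj hns h)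

end AuxStmt3

theorem stmt3 {V : Type*} [Fintype V] (G : SimpleGraph V) (h : ¬Skeletal G) :
    ∃ G' : SimpleGraph V, G' ≤ G ∧ Skeletal G' ∧
      G'.chromaticNumber = G.chromaticNumber ∧
      (ClawFree G → ClawFree G') ∧
      (QuasiLine G → QuasiLine G') ∧
      (Gᶜ.Colorable 3 → G'ᶜ.Colorable 3) := by
  classical
  exact main_aux (G.edgeSet.ncard) G le_rfl

end Paper
end
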